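/- arXiv:1401.7183 — 2 statements merged into one kernel-verified Lean document; each statement's English description precedes it below -/
import Mathlib

section
/- Let ℓ and k be integers with 1 ≤ ℓ ≤ 3 and k ≥ ℓ. Then ᾱ({1, 2k, 2k+2ℓ}) = 2k/(4k+2ℓ). -/
open Filter

/-- The upper density of a set of integers. -/
noncomputable def density (A : Set ℤ) : ℝ :=
  Filter.limsup
    (fun N : ℕ => ((A ∩ Set.Icc (-(N : ℤ)) (N : ℤ)).ncard : ℝ) / (2 * (N : ℝ) + 1))
    Filter.atTop

/-- A set of integers is independent in the distance graph `G(S)` if no two distinct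
elements differ by an element of `S`. -/
def IsIndepSet (S : Finset ℕ) (A : Set ℤ) : Prop :=
  ∀ a ∈ A, ∀ b ∈ A, a ≠ b → (a - b).natAbs ∉ S

/-- The independence ratio of the distance graph `G(S)`. -/
noncomputable def indRatio (S : Finset ℕ) : ℝ :=
  sSup (density '' {A : Set ℤ | IsIndepSet S A})

open Topology

set_option linter.unusedVariables false
set_option maxHeartbeats 1000000

lemma cast_inj_of_lt {n : ℕ} {a b : ℕ} (ha : a < n) (hb : b < n)
    (h : ((a : ZMod n) = (b : ZMod n))) : a = b := by
  have : NeZero n := ⟨by omega⟩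
  have h2 := congrArg ZMod.val h
  rwa [ZMod.val_cast_of_lt ha, ZMod.val_cast_of_lt hb] at h2

lemma double_card_le {n : ℕ} [NeZero n] (X : Finset (ZMod n)) (g : ZMod n)
    (h : ∀ x ∈ X, x + g ∉ X) : 2 * X.card ≤ n := by
  classical
  have hinj : Set.InjOn (· + g) X := fun a _ b _ hab => by simpa using hab
  have hdisj : Disjoint X (X.image (· + g)) := by
    rw [Finset.disjoint_right]
    intro x hx
    simp only [Finset.mem_image] at hx
    obtain ⟨y, hy, rfl⟩ := hx
    exact h y hy
  calc 2 * X.card = X.card + (X.image (· + g)).card := by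
        rw [Finset.card_image_of_injOn hinj]; ring
    _ = (X ∪ X.image (· + g)).card := (Finset.card_union_of_disjoint hdisj).symm
    _ ≤ (Finset.univ : Finset (ZMod n)).card := Finset.card_le_card (Finset.subset_univ _)
    _ = n := by rw [Finset.card_univ, ZMod.card]

lemma sigma_bound (m : ℕ) (hm : 1 ≤ m) (C : Finset ℤ)
    (hC : ∀ x ∈ C, 0 ≤ x ∧ x ≤ 2*(m:ℤ))
    (h1 : ∀ x ∈ C, ∀ y ∈ C, x - y ≠ (m:ℤ))
    (h2 : ∀ x ∈ C, ∀ y ∈ C, x - y ≠ (m:ℤ)+1) : C.card ≤ m := by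
  classical
  set σ : ℤ → ℤ := fun j => if j ≤ (m:ℤ) then j + m else j - (m+1) with hσ
  have himg : ∀ x ∈ C, σ x ∈ Finset.Icc (0:ℤ) (2*m) := by
    intro x hx
    obtain ⟨h0, h1'⟩ := hC x hx
    simp only [hσ, Finset.mem_Icc]
    split <;> omega
  have hCsub : ∀ x ∈ C, x ∈ Finset.Icc (0:ℤ) (2*m) := by
    intro x hx; obtain ⟨h0, h1'⟩ := hC x hx; simp only [Finset.mem_Icc]; omega
  have hinj : Set.InjOn σ C := by
    intro a ha b hb hab
    have h0a := hC a ha; have h0b := hC b hb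
    simp only [hσ] at hab
    split at hab <;> split at hab <;> omega
  have hdisj : Disjoint C (C.image σ) := by
    rw [Finset.disjoint_right]
    intro x hx
    simp only [Finset.mem_image] at hx
    obtain ⟨y, hy, rfl⟩ := hx
    intro hσy
    by_cases hc : y ≤ (m:ℤ)
    · have : σ y - y = m := by simp [hσ, hc]
      exact h1 (σ y) hσy y hy this
    · have : y - σ y = (m:ℤ)+1 := by simp only [hσ, if_neg hc]; ring
      exact h2 y hy (σ y) hσy this
  have hcard : C.card + (C.image σ).card ≤ (Finset.Icc (0:ℤ) (2*m)).card := by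
    rw [← Finset.card_union_of_disjoint hdisj]
    apply Finset.card_le_card
    intro x hx
    rcases Finset.mem_union.mp hx with h | h
    · exact hCsub x h
    · simp only [Finset.mem_image] at h
      obtain ⟨y, hy, rfl⟩ := h
      exact himg y hy
  rw [Finset.card_image_of_injOn hinj] at hcard
  have : (Finset.Icc (0:ℤ) (2*(m:ℤ))).card = 2*m+1 := by
    rw [Int.card_Icc]
    simp
    omega
  omega

lemma rigid_odd (n m : ℕ) (hm : 1 ≤ m) (hn : n = 2*m+1) (X : Finset (ZMod n))
    (h : ∀ x ∈ X, x + 1 ∉ X) (hcard : X.card = m) :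
    ∃ z : ZMod n,
      X = (Finset.range m).image (fun i => z + ((2*i+1 : ℕ) : ZMod n)) ∧
      ∀ u : ZMod n, u ∉ X →
        u ∈ (Finset.range (m+1)).image (fun i => z + ((2*i : ℕ) : ZMod n)) := by
  classical
  haveI : NeZero n := ⟨by omega⟩
  have hinj : Set.InjOn (· + (1:ZMod n)) X := fun a _ b _ hab => by simpa using hab
  have hdisj : Disjoint X (X.image (· + (1:ZMod n))) := by
    rw [Finset.disjoint_right]
    intro x hx
    simp only [Finset.mem_image] at hx
    obtain ⟨y, hy, rfl⟩ := hx
    exact h y hy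
  have hucard : (X ∪ X.image (· + (1:ZMod n))).card = 2*m := by
    rw [Finset.card_union_of_disjoint hdisj, Finset.card_image_of_injOn hinj, hcard]; ring
  have hcompl : (Finset.univ \ (X ∪ X.image (· + (1:ZMod n)))).card = 1 := by
    rw [Finset.card_sdiff_of_subset (Finset.subset_univ _), Finset.card_univ, ZMod.card, hucard]
    omega
  obtain ⟨z, hz⟩ := Finset.card_eq_one.mp hcompl
  have hzX : z ∉ X := by
    have : z ∈ Finset.univ \ (X ∪ X.image (· + (1:ZMod n))) := by rw [hz]; simp
    simp only [Finset.mem_sdiff, Finset.mem_union] at this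
    tauto
  have hzX1 : z + 1 ∉ X.image (· + (1:ZMod n)) → True := fun _ => trivial
  have hcover : ∀ u : ZMod n, u ≠ z → u ∈ X ∨ ∃ x ∈ X, x + 1 = u := by
    intro u hu
    by_contra hcon
    push_neg at hcon
    have : u ∈ Finset.univ \ (X ∪ X.image (· + (1:ZMod n))) := by
      simp only [Finset.mem_sdiff, Finset.mem_union, Finset.mem_univ, true_and,
        Finset.mem_image]
      push_neg
      exact ⟨hcon.1, fun x hx => hcon.2 x hx⟩
    rw [hz] at this
    simp only [Finset.mem_singleton] at this
    exact hu this
  have hnat : ∀ a b : ℕ, a < n → b < n → z + (a:ZMod n) = z + (b:ZMod n) → a = b := by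
    intro a b ha hb hab
    exact cast_inj_of_lt ha hb (by exact add_left_cancel hab)
  have key : ∀ i, i < m → z + ((2*i+1 : ℕ) : ZMod n) ∈ X := by
    intro i
    induction i with
    | zero =>
      intro _
      have hne : z + ((1:ℕ) : ZMod n) ≠ z := by
        intro hcon
        have : (1:ℕ) = 0 := hnat 1 0 (by omega) (by omega) (by simpa using hcon)
        omega
      rcases hcover _ hne with hin | ⟨x, hx, hx1⟩
      · simpa using hin
      · exfalso
        apply hzX
        have h'' : x = z := by
          have hxz : x + 1 = z + 1 := by rw [hx1]; norm_cast
          exact add_right_cancel hxz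
        rwa [h''] at hx
    | succ i ih =>
      intro hi
      have hii : i < m := by omega
      have hprev := ih hii
      have ha : z + ((2*i+2 : ℕ) : ZMod n) ∉ X := by
        intro hcon
        apply h _ hprev
        have : z + ((2*i+1 : ℕ) : ZMod n) + 1 = z + ((2*i+2 : ℕ) : ZMod n) := by
          push_cast; ring
        rw [this]; exact hcon
      have hne : z + ((2*i+3 : ℕ) : ZMod n) ≠ z := by
        intro hcon
        have : (2*i+3 : ℕ) = 0 := hnat _ 0 (by omega) (by omega) (by simpa using hcon)
        omega
      rcases hcover _ hne with hin | ⟨x, hx, hx1⟩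
      · have : (2*(i+1)+1 : ℕ) = 2*i+3 := by ring
        rw [this]; exact hin
      · exfalso
        apply ha
        have : x = z + ((2*i+2 : ℕ) : ZMod n) := by
          have h' : x + 1 = z + ((2*i+2 : ℕ) : ZMod n) + 1 := by
            rw [hx1]; push_cast; ring
          exact add_right_cancel h'
        rw [← this]; exact hx
  set Odd' := (Finset.range m).image (fun i => z + ((2*i+1 : ℕ) : ZMod n)) with hOdd
  have hOX : Odd' ⊆ X := by
    intro u hu
    simp only [hOdd, Finset.mem_image, Finset.mem_range] at hu
    obtain ⟨i, hi, rfl⟩ := hu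
    exact key i hi
  have hOcard : Odd'.card = m := by
    rw [hOdd, Finset.card_image_of_injOn, Finset.card_range]
    intro a ha b hb hab
    simp only [Finset.coe_range, Set.mem_Iio] at ha hb
    have := hnat _ _ (by omega) (by omega) hab
    omega
  have hXO : X = Odd' := (Finset.eq_of_subset_of_card_le hOX (by omega)).symm
  set Ev := (Finset.range (m+1)).image (fun i => z + ((2*i : ℕ) : ZMod n)) with hEv
  have hEcard : Ev.card = m+1 := by
    rw [hEv, Finset.card_image_of_injOn, Finset.card_range]
    intro a ha b hb hab
    simp only [Finset.coe_range, Set.mem_Iio] at ha hb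
    have := hnat _ _ (by omega) (by omega) hab
    omega
  have hdisj2 : Disjoint Ev X := by
    rw [Finset.disjoint_left]
    intro u hu hu2
    rw [hXO] at hu2
    simp only [hEv, Finset.mem_image, Finset.mem_range] at hu
    simp only [hOdd, Finset.mem_image, Finset.mem_range] at hu2
    obtain ⟨i, hi, rfl⟩ := hu
    obtain ⟨j, hj, hj2⟩ := hu2
    have := hnat _ _ (by omega) (by omega) hj2.symm
    omega
  have huniv : Ev ∪ X = Finset.univ := by
    apply Finset.eq_univ_of_card
    rw [Finset.card_union_of_disjoint hdisj2, hEcard, hcard, ZMod.card]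
    omega
  refine ⟨z, hXO, ?_⟩
  intro u hu
  have : u ∈ Ev ∪ X := by rw [huniv]; simp
  rcases Finset.mem_union.mp this with h' | h'
  · exact h'
  · exact absurd h' hu

lemma rigid_even (n m : ℕ) (hm : 1 ≤ m) (hn : n = 2*m) (X : Finset (ZMod n))
    (h : ∀ x ∈ X, x + 1 ∉ X) (hcard : X.card = m) :
    ∃ z : ZMod n,
      X = (Finset.range m).image (fun i => z + ((2*i : ℕ) : ZMod n)) ∧
      ∀ u : ZMod n, u ∉ X →
        u ∈ (Finset.range m).image (fun i => z + ((2*i+1 : ℕ) : ZMod n)) := by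
  classical
  haveI : NeZero n := ⟨by omega⟩
  have hinj : Set.InjOn (· + (1:ZMod n)) X := fun a _ b _ hab => by simpa using hab
  have hdisj : Disjoint X (X.image (· + (1:ZMod n))) := by
    rw [Finset.disjoint_right]
    intro x hx
    simp only [Finset.mem_image] at hx
    obtain ⟨y, hy, rfl⟩ := hx
    exact h y hy
  have huniv : X ∪ X.image (· + (1:ZMod n)) = Finset.univ := by
    apply Finset.eq_univ_of_card
    rw [Finset.card_union_of_disjoint hdisj, Finset.card_image_of_injOn hinj, hcard,
      ZMod.card]
    omega
  have hcover : ∀ u : ZMod n, u ∈ X ∨ ∃ x ∈ X, x + 1 = u := by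
    intro u
    have : u ∈ X ∪ X.image (· + (1:ZMod n)) := by rw [huniv]; simp
    rcases Finset.mem_union.mp this with h' | h'
    · exact Or.inl h'
    · simp only [Finset.mem_image] at h'
      obtain ⟨x, hx, hx1⟩ := h'
      exact Or.inr ⟨x, hx, hx1⟩
  obtain ⟨z, hzX⟩ := Finset.card_pos.mp (by omega : 0 < X.card)
  have hnat : ∀ a b : ℕ, a < n → b < n → z + (a:ZMod n) = z + (b:ZMod n) → a = b := by
    intro a b ha hb hab
    exact cast_inj_of_lt ha hb (add_left_cancel hab)
  have key : ∀ i, i < m → z + ((2*i : ℕ) : ZMod n) ∈ X := by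
    intro i
    induction i with
    | zero => intro _; simpa using hzX
    | succ i ih =>
      intro hi
      have hprev := ih (by omega)
      have ha : z + ((2*i+1 : ℕ) : ZMod n) ∉ X := by
        intro hcon
        apply h _ hprev
        have : z + ((2*i : ℕ) : ZMod n) + 1 = z + ((2*i+1 : ℕ) : ZMod n) := by push_cast; ring
        rw [this]; exact hcon
      rcases hcover (z + ((2*(i+1) : ℕ) : ZMod n)) with hin | ⟨x, hx, hx1⟩
      · exact hin
      · exfalso
        apply ha
        have : x = z + ((2*i+1 : ℕ) : ZMod n) := by
          have h' : x + 1 = z + ((2*i+1 : ℕ) : ZMod n) + 1 := by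
            rw [hx1]; push_cast; ring
          exact add_right_cancel h'
        rw [← this]; exact hx
  set Ev := (Finset.range m).image (fun i => z + ((2*i : ℕ) : ZMod n)) with hEv
  have hEX : Ev ⊆ X := by
    intro u hu
    simp only [hEv, Finset.mem_image, Finset.mem_range] at hu
    obtain ⟨i, hi, rfl⟩ := hu
    exact key i hi
  have hEcard : Ev.card = m := by
    rw [hEv, Finset.card_image_of_injOn, Finset.card_range]
    intro a ha b hb hab
    simp only [Finset.coe_range, Set.mem_Iio] at ha hb
    have := hnat _ _ (by omega) (by omega) hab
    omega
  have hXE : X = Ev := (Finset.eq_of_subset_of_card_le hEX (by omega)).symm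
  set Od := (Finset.range m).image (fun i => z + ((2*i+1 : ℕ) : ZMod n)) with hOd
  have hOcard : Od.card = m := by
    rw [hOd, Finset.card_image_of_injOn, Finset.card_range]
    intro a ha b hb hab
    simp only [Finset.coe_range, Set.mem_Iio] at ha hb
    have := hnat _ _ (by omega) (by omega) hab
    omega
  have hdisj2 : Disjoint Od X := by
    rw [Finset.disjoint_left]
    intro u hu hu2
    rw [hXE] at hu2
    simp only [hOd, Finset.mem_image, Finset.mem_range] at hu
    simp only [hEv, Finset.mem_image, Finset.mem_range] at hu2
    obtain ⟨i, hi, rfl⟩ := hu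
    obtain ⟨j, hj, hj2⟩ := hu2
    have := hnat _ _ (by omega) (by omega) hj2.symm
    omega
  have huniv2 : Od ∪ X = Finset.univ := by
    apply Finset.eq_univ_of_card
    rw [Finset.card_union_of_disjoint hdisj2, hOcard, hcard, ZMod.card]
    omega
  refine ⟨z, hXE, ?_⟩
  intro u hu
  have : u ∈ Od ∪ X := by rw [huniv2]; simp
  rcases Finset.mem_union.mp this with h' | h'
  · exact h'
  · exact absurd h' hu

lemma mem_odd_image {n M c : ℕ} (z : ZMod n) (hc : c % 2 = 1) (hcM : c < 2*M) :
    z + ((c : ℕ) : ZMod n) ∈ (Finset.range M).image (fun i => z + ((2*i+1 : ℕ) : ZMod n)) := by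
  refine Finset.mem_image.mpr ⟨c/2, Finset.mem_range.mpr (by omega), ?_⟩
  have h : 2*(c/2)+1 = c := by omega
  rw [h]

lemma mem_even_image {n M c : ℕ} (z : ZMod n) (hc : c % 2 = 0) (hcM : c < 2*M) :
    z + ((c : ℕ) : ZMod n) ∈ (Finset.range M).image (fun i => z + ((2*i : ℕ) : ZMod n)) := by
  refine Finset.mem_image.mpr ⟨c/2, Finset.mem_range.mpr (by omega), ?_⟩
  have h : 2*(c/2) = c := by omega
  rw [h]

lemma add_cast_add {n : ℕ} [NeZero n] (z : ZMod n) (a : ℕ) (w : ZMod n) :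
    z + (a : ZMod n) + w = z + ((a + w.val : ℕ) : ZMod n) := by
  have hw : ((w.val : ℕ) : ZMod n) = w := ZMod.natCast_rightInverse w
  push_cast
  rw [hw]
  ring

lemma cast_reduce {n : ℕ} (c : ℕ) : ((c + n : ℕ) : ZMod n) = (c : ZMod n) := by
  push_cast [ZMod.natCast_self]
  ring

lemma card_image_offset {n : ℕ} (z : ZMod n) (e : ℕ → ℕ) (M : ℕ)
    (he : ∀ j, j < M → e j < n) (hinj : ∀ i, i < M → ∀ j, j < M → e i = e j → i = j) :
    ((Finset.range M).image (fun j => z + ((e j : ℕ) : ZMod n))).card = M := by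
  rw [Finset.card_image_of_injOn, Finset.card_range]
  intro a ha b hb hab
  simp only [Finset.coe_range, Set.mem_Iio] at ha hb
  have h2 := add_left_cancel hab
  exact hinj a ha b hb (cast_inj_of_lt (he a ha) (he b hb) h2)

section Core3

variable (n k : ℕ)

lemma core3_key (hk : 4 ≤ k) (hn : n = 2*k+3) (v : ℕ) (hvlt : v < n)
    (hv3 : (3*v) % n = 2) : 3*v = n+2 ∨ 3*v = 2*n+2 := by
  have hq : 3*v/n < 3 := Nat.div_lt_of_lt_mul (by omega)
  have hd := Nat.div_add_mod (3*v) n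
  rw [hv3] at hd
  set q := 3*v/n with hqdef
  interval_cases q <;> omega

lemma core3_aux1 (hk : 4 ≤ k) (hn : n = 2*k+3) (w : ZMod n)
    (hv3 : (3*w.val) % n = 2)
    (X Y : Finset (ZMod n))
    (hX : ∀ x ∈ X, x + 1 ∉ X)
    (hXY : ∀ x ∈ X, x ∉ Y)
    (hcross : ∀ y ∈ Y, y ≠ -w → y + w ∉ X)
    (hXcard : X.card = k+1) (hYcard : k ≤ Y.card) : False := by
  classical
  haveI : NeZero n := ⟨by omega⟩
  obtain ⟨z, hXeq, hXc⟩ := rigid_odd n (k+1) (by omega) (by omega) X hX hXcard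
  set Ev := (Finset.range (k+2)).image (fun i => z + ((2*i : ℕ) : ZMod n)) with hEv
  have hYsub : Y ⊆ Ev := fun y hy => hXc y (fun hyX => hXY y hyX hy)
  have hEvcard : Ev.card ≤ k+2 := le_trans Finset.card_image_le (by simp)
  have hYle : Y.card ≤ Ev.card := Finset.card_le_card hYsub
  have hsd : (Ev \ Y).card ≤ 2 := by
    rw [Finset.card_sdiff_of_subset hYsub]
    omega
  have hvlt : w.val < n := ZMod.val_lt w
  have hkey := core3_key n k hk hn w.val hvlt hv3
  -- candidates
  have main : ∀ e : ℕ → ℕ,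
      (∀ j, j < 4 → e j % 2 = 0 ∧ e j < 2*(k+2)) →
      (∀ i, i < 4 → ∀ j, j < 4 → e i = e j → i = j) →
      (∀ j, j < 4 → z + ((e j : ℕ) : ZMod n) + w ∈ X) → False := by
    intro e hejprops heinj hew
    set Bad := (Ev \ Y) ∪ {-w} with hBad
    have hBadcard : Bad.card ≤ 3 := by
      refine le_trans (Finset.card_union_le _ _) ?_
      have := Finset.card_singleton (-w)
      omega
    set C4 := (Finset.range 4).image (fun j => z + ((e j : ℕ) : ZMod n)) with hC4
    have hC4card : C4.card = 4 := by
      apply card_image_offset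
      · intro j hj
        have h1 := (hejprops j hj).1
        have h2 := (hejprops j hj).2
        omega
      · exact heinj
    have hnotsub : ¬ C4 ⊆ Bad := by
      intro hsub
      have := Finset.card_le_card hsub
      omega
    obtain ⟨u, huC4, huBad⟩ := Finset.not_subset.mp hnotsub
    simp only [hC4, Finset.mem_image, Finset.mem_range] at huC4
    obtain ⟨j, hj, rfl⟩ := huC4
    simp only [hBad, Finset.mem_union, Finset.mem_singleton, Finset.mem_sdiff, not_or,
      not_and, not_not] at huBad
    obtain ⟨hu1, hu2⟩ := huBad
    have huEv : z + ((e j : ℕ) : ZMod n) ∈ Ev := by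
      rw [hEv]
      exact mem_even_image z (hejprops j hj).1 (hejprops j hj).2
    have huY : z + ((e j : ℕ) : ZMod n) ∈ Y := hu1 huEv
    exact hcross _ huY hu2 (hew j hj)
  rcases Nat.even_or_odd w.val with hpar | hpar
  · -- v even : 3v = 2n+2, v ≥ 8
    have hv8 : 8 ≤ w.val ∧ w.val % 2 = 0 := by
      obtain ⟨t, ht⟩ := hpar
      rcases hkey with h | h <;> omega
    apply main (fun j => n - w.val + 1 + 2*j)
    · intro j hj
      constructor
      · omega
      · omega
    · intro i hi j hj hij; omega
    · intro j hj
      rw [add_cast_add]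
      have harith : n - w.val + 1 + 2*j + w.val = (2*j+1) + n := by omega
      rw [harith, cast_reduce, hXeq]
      exact mem_odd_image z (by omega) (by omega)
  · -- v odd : 3v = n+2, v ≤ n - 8
    have hvle : w.val ≤ n - 8 ∧ w.val % 2 = 1 := by
      obtain ⟨t, ht⟩ := hpar
      rcases hkey with h | h <;> omega
    apply main (fun j => 2*j)
    · intro j hj; constructor
      · omega
      · omega
    · intro i hi j hj hij; omega
    · intro j hj
      rw [add_cast_add, hXeq]
      exact mem_odd_image z (by omega) (by omega)

lemma core3_aux2 (hk : 4 ≤ k) (hn : n = 2*k+3) (w : ZMod n)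
    (hv3 : (3*w.val) % n = 2)
    (X Y : Finset (ZMod n))
    (hY : ∀ y ∈ Y, y + 1 ∉ Y)
    (hXY : ∀ x ∈ X, x ∉ Y)
    (hcross : ∀ y ∈ Y, y ≠ -w → y + w ∉ X)
    (hYcard : Y.card = k+1) (hXcard : k ≤ X.card) : False := by
  classical
  haveI : NeZero n := ⟨by omega⟩
  obtain ⟨z, hYeq, hYc⟩ := rigid_odd n (k+1) (by omega) (by omega) Y hY hYcard
  set Ev := (Finset.range (k+2)).image (fun i => z + ((2*i : ℕ) : ZMod n)) with hEv
  have hXsub : X ⊆ Ev := fun x hx => hYc x (hXY x hx)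
  have hEvcard : Ev.card ≤ k+2 := le_trans Finset.card_image_le (by simp)
  have hXle : X.card ≤ Ev.card := Finset.card_le_card hXsub
  have hsd : (Ev \ X).card ≤ 2 := by
    rw [Finset.card_sdiff_of_subset hXsub]
    omega
  have hvlt : w.val < n := ZMod.val_lt w
  have hkey := core3_key n k hk hn w.val hvlt hv3
  have main : ∀ e : ℕ → ℕ,
      (∀ j, j < 4 → e j % 2 = 1 ∧ e j < 2*(k+1)) →
      (∀ i, i < 4 → ∀ j, j < 4 → e i = e j → i = j) →
      (∀ j, j < 4 → ∃ c : ℕ, c % 2 = 0 ∧ c < 2*(k+2) ∧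
          z + ((e j : ℕ) : ZMod n) + w = z + ((c : ℕ) : ZMod n)) → False := by
    intro e hejprops heinj hew
    set Bad := ((Ev \ X).image (fun u => u - w)) ∪ {-w} with hBad
    have hBadcard : Bad.card ≤ 3 := by
      refine le_trans (Finset.card_union_le _ _) ?_
      have h1 : ((Ev \ X).image (fun u => u - w)).card ≤ 2 :=
        le_trans Finset.card_image_le hsd
      have := Finset.card_singleton (-w)
      omega
    set C4 := (Finset.range 4).image (fun j => z + ((e j : ℕ) : ZMod n)) with hC4
    have hC4card : C4.card = 4 := by
      apply card_image_offset
      · intro j hj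
        have h1 := (hejprops j hj).1
        have h2 := (hejprops j hj).2
        omega
      · exact heinj
    have hnotsub : ¬ C4 ⊆ Bad := by
      intro hsub
      have := Finset.card_le_card hsub
      omega
    obtain ⟨u, huC4, huBad⟩ := Finset.not_subset.mp hnotsub
    simp only [hC4, Finset.mem_image, Finset.mem_range] at huC4
    obtain ⟨j, hj, rfl⟩ := huC4
    simp only [hBad, Finset.mem_union, Finset.mem_singleton, Finset.mem_image, not_or,
      not_exists, not_and] at huBad
    obtain ⟨hu1, hu2⟩ := huBad
    have huY : z + ((e j : ℕ) : ZMod n) ∈ Y := by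
      rw [hYeq]
      exact mem_odd_image z (hejprops j hj).1 (hejprops j hj).2
    obtain ⟨c, hc0, hc1, hc2⟩ := hew j hj
    have hwX : z + ((e j : ℕ) : ZMod n) + w ∈ X := by
      by_contra hnot
      have hmemEv : z + ((c : ℕ) : ZMod n) ∈ Ev := by
        rw [hEv]; exact mem_even_image z hc0 hc1
      have hmem : z + ((e j : ℕ) : ZMod n) + w ∈ Ev \ X := by
        rw [hc2] at hnot ⊢
        exact Finset.mem_sdiff.mpr ⟨hmemEv, hnot⟩
      apply hu1 _ hmem
      rw [add_sub_cancel_right]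
    exact hcross _ huY hu2 hwX
  rcases Nat.even_or_odd w.val with hpar | hpar
  · -- v even : v ≥ 8 ; candidates odd e j = n - v + 2j ; e j + v = n + 2j → c = 2j
    have hv8 : 8 ≤ w.val ∧ w.val % 2 = 0 := by
      obtain ⟨t, ht⟩ := hpar
      rcases hkey with h | h <;> omega
    apply main (fun j => n - w.val + 2*j)
    · intro j hj; exact ⟨by omega, by omega⟩
    · intro i hi j hj hij; omega
    · intro j hj
      refine ⟨2*j, by omega, by omega, ?_⟩
      rw [add_cast_add]
      have harith : n - w.val + 2*j + w.val = (2*j) + n := by omega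
      rw [harith, cast_reduce]
  · -- v odd : v ≤ n-8 ; candidates e j = 2j+1, c = 2j+1+v
    have hvle : w.val ≤ n - 8 ∧ w.val % 2 = 1 := by
      obtain ⟨t, ht⟩ := hpar
      rcases hkey with h | h <;> omega
    apply main (fun j => 2*j+1)
    · intro j hj; exact ⟨by omega, by omega⟩
    · intro i hi j hj hij; omega
    · intro j hj
      refine ⟨2*j+1+w.val, by omega, by omega, ?_⟩
      rw [add_cast_add]

lemma core3 (hk : 4 ≤ k) (hn : n = 2*k+3) (w : ZMod n)
    (hw : ((3:ℕ) : ZMod n) * w = ((2:ℕ) : ZMod n))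
    (X Y : Finset (ZMod n))
    (hX : ∀ x ∈ X, x + 1 ∉ X) (hY : ∀ y ∈ Y, y + 1 ∉ Y)
    (hXY : ∀ x ∈ X, x ∉ Y)
    (hcross : ∀ y ∈ Y, y ≠ -w → y + w ∉ X) :
    X.card + Y.card ≤ 2*k := by
  classical
  haveI : NeZero n := ⟨by omega⟩
  have hv3 : (3*w.val) % n = 2 := by
    have h1 : (((3:ℕ) : ZMod n) * w).val = 2 := by
      rw [hw]; exact ZMod.val_cast_of_lt (by omega)
    rwa [ZMod.val_mul, ZMod.val_cast_of_lt (show (3:ℕ) < n by omega)] at h1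
  by_contra hcon
  push_neg at hcon
  have hXb : 2 * X.card ≤ n := double_card_le X 1 hX
  have hYb : 2 * Y.card ≤ n := double_card_le Y 1 hY
  by_cases hX1 : X.card = k+1
  · exact core3_aux1 n k hk hn w hv3 X Y hX hXY hcross hX1 (by omega)
  · have hY1 : Y.card = k+1 := by omega
    exact core3_aux2 n k hk hn w hv3 X Y hY hXY hcross hY1 (by omega)

end Core3

lemma core2 (n k : ℕ) (hk : 3 ≤ k) (hkodd : k % 2 = 1) (hn : n = 2*k+2)
    (w : ZMod n) (hw : ((k:ℕ) : ZMod n) * w = 1)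
    (X Y : Finset (ZMod n))
    (hX : ∀ x ∈ X, x + 1 ∉ X) (hY : ∀ y ∈ Y, y + 1 ∉ Y)
    (hXY : ∀ x ∈ X, x ∉ Y)
    (hcross : ∀ y ∈ Y, y ≠ -w → y + w ∉ X) :
    X.card + Y.card ≤ 2*k := by
  classical
  haveI : NeZero n := ⟨by omega⟩
  have hvlt : w.val < n := ZMod.val_lt w
  have hv : (k * w.val) % n = 1 := by
    have h1 : (((k:ℕ) : ZMod n) * w).val = 1 := by
      rw [hw]
      have : ((1:ℕ) : ZMod n) = 1 := by norm_cast
      rw [← this]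
      exact ZMod.val_cast_of_lt (by omega)
    rwa [ZMod.val_mul, ZMod.val_cast_of_lt (show (k:ℕ) < n by omega)] at h1
  have hvodd : w.val % 2 = 1 := by
    have h2n : (2:ℕ) ∣ n := ⟨k+1, by omega⟩
    have h1 : (k * w.val) % 2 = 1 := by
      have h := Nat.mod_mod_of_dvd (k * w.val) h2n
      rw [hv] at h
      simpa using h.symm
    have h2 : (k % 2) * (w.val % 2) % 2 = 1 := by rw [← Nat.mul_mod]; exact h1
    rw [hkodd] at h2
    omega
  by_contra hcon
  push_neg at hcon
  have hXb : 2 * X.card ≤ n := double_card_le X 1 hX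
  have hYb : 2 * Y.card ≤ n := double_card_le Y 1 hY
  by_cases hX1 : X.card = k+1
  · -- X is a full parity class; then Y ⊆ {-w}
    obtain ⟨z, hXeq, hXc⟩ := rigid_even n (k+1) (by omega) (by omega) X hX hX1
    have hYw : ∀ y ∈ Y, y = -w := by
      intro y hy
      by_contra hne
      have hyX : y ∉ X := fun h => hXY y h hy
      have hyOd := hXc y hyX
      simp only [Finset.mem_image, Finset.mem_range] at hyOd
      obtain ⟨i, hi, rfl⟩ := hyOd
      apply hcross _ hy hne
      rw [add_cast_add, hXeq]
      by_cases hcn : 2*i+1 + w.val < n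
      · exact mem_even_image z (by omega) (by omega)
      · have harith : 2*i+1 + w.val = (2*i+1 + w.val - n) + n := by omega
        rw [harith, cast_reduce]
        exact mem_even_image z (by omega) (by omega)
    have hYcard : Y.card ≤ 1 := by
      apply Finset.card_le_one.mpr
      intro a ha b hb
      rw [hYw a ha, hYw b hb]
    omega
  · have hY1 : Y.card = k+1 := by omega
    obtain ⟨z, hYeq, hYc⟩ := rigid_even n (k+1) (by omega) (by omega) Y hY hY1
    have hX0 : ∀ x ∈ X, x = 0 := by
      intro x hx
      have hxY : x ∉ Y := hXY x hx
      have hxOd := hYc x hxY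
      simp only [Finset.mem_image, Finset.mem_range] at hxOd
      obtain ⟨i, hi, rfl⟩ := hxOd
      -- construct y ∈ Y with y + w = x
      set c0 := 2*i+1 + (n - w.val) with hc0
      by_cases hcn : c0 < n
      · have hyY : z + ((c0 : ℕ) : ZMod n) ∈ Y := by
          rw [hYeq]
          exact mem_even_image z (by omega) (by omega)
        have hyw : z + ((c0 : ℕ) : ZMod n) + w = z + ((2*i+1 : ℕ) : ZMod n) := by
          rw [add_cast_add]
          have harith : c0 + w.val = (2*i+1) + n := by omega
          rw [harith, cast_reduce]
        rcases eq_or_ne (z + ((c0 : ℕ) : ZMod n)) (-w) with he | hne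
        · rw [← hyw, he]
          ring
        · exfalso
          exact hcross _ hyY hne (by rw [hyw]; exact hx)
      · set c := c0 - n with hc
        have hyY : z + ((c : ℕ) : ZMod n) ∈ Y := by
          rw [hYeq]
          exact mem_even_image z (by omega) (by omega)
        have hyw : z + ((c : ℕ) : ZMod n) + w = z + ((2*i+1 : ℕ) : ZMod n) := by
          rw [add_cast_add]
          have harith : c + w.val = 2*i+1 := by omega
          rw [harith]
        rcases eq_or_ne (z + ((c : ℕ) : ZMod n)) (-w) with he | hne
        · rw [← hyw, he]
          ring
        · exfalso
          exact hcross _ hyY hne (by rw [hyw]; exact hx)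
    have hXcard : X.card ≤ 1 := by
      apply Finset.card_le_one.mpr
      intro a ha b hb
      rw [hX0 a ha, hX0 b hb]
    omega

lemma dvd_cases5 {n : ℕ} {c : ℤ} (hn : 0 < n) (hdvd : ((n:ℤ)) ∣ c)
    (hlb : -(3*(n:ℤ)) < c) (hub : c < 3*(n:ℤ)) :
    c = -(2*(n:ℤ)) ∨ c = -(n:ℤ) ∨ c = 0 ∨ c = (n:ℤ) ∨ c = 2*(n:ℤ) := by
  obtain ⟨t, ht⟩ := hdvd
  have hn' : (0:ℤ) < n := by exact_mod_cast hn
  have ht2 : t < 3 := by nlinarith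
  have ht3 : -3 < t := by nlinarith
  interval_cases t <;> omega

lemma window_div (L k m : ℕ) (hL1 : 1 ≤ L) (hm : 1 ≤ m) (hk : k = L*m)
    (F : Finset ℤ) (a : ℤ)
    (hFsub : ∀ x ∈ F, a ≤ x ∧ x < a + ((4*k+2*L : ℕ) : ℤ))
    (hd2k : ∀ x ∈ F, ∀ y ∈ F, x - y ≠ 2*(k:ℤ))
    (hd2kL : ∀ x ∈ F, ∀ y ∈ F, x - y ≠ 2*(k:ℤ)+2*(L:ℤ)) :
    F.card ≤ 2*k := by
  classical
  set d : ℤ := 2*(L:ℤ) with hd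
  have hd0 : (0:ℤ) < d := by positivity
  have hfib : F.card = ∑ r ∈ Finset.range (2*L),
      (F.filter (fun x => ((x - a) % d).toNat = r)).card := by
    apply Finset.card_eq_sum_card_fiberwise
    intro x _
    simp only [Finset.mem_coe, Finset.mem_range]
    have h1 := Int.emod_nonneg (x - a) (ne_of_gt hd0)
    have h2 := Int.emod_lt_of_pos (x - a) hd0
    omega
  have hfibbd : ∀ r : ℕ, (F.filter (fun x => ((x - a) % d).toNat = r)).card ≤ m := by
    intro r
    set Fr := F.filter (fun x => ((x - a) % d).toNat = r) with hFr
    have hmemFr : ∀ x ∈ Fr, x ∈ F ∧ ((x - a) % d).toNat = r := by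
      intro x hx
      exact ⟨(Finset.mem_filter.mp hx).1, (Finset.mem_filter.mp hx).2⟩
    have hbounds : ∀ x ∈ Fr, 0 ≤ x - a ∧ x - a < d * (2*(m:ℤ)+1) := by
      intro x hx
      obtain ⟨hxF, _⟩ := hmemFr x hx
      obtain ⟨h1, h2⟩ := hFsub x hxF
      constructor
      · omega
      · have : ((4*k+2*L : ℕ) : ℤ) = d * (2*(m:ℤ)+1) := by
          rw [hd]; push_cast [hk]; ring
        omega
    have hinjψ : Set.InjOn (fun x => (x - a) / d) Fr := by
      intro x hx y hy hxy
      simp only at hxy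
      have e1 := Int.mul_ediv_add_emod (x - a) d
      have e2 := Int.mul_ediv_add_emod (y - a) d
      rw [← hxy] at e2
      have hr1 := (hmemFr x hx).2
      have hr2 := (hmemFr y hy).2
      have hm1 := Int.emod_nonneg (x - a) (ne_of_gt hd0)
      have hm2 := Int.emod_nonneg (y - a) (ne_of_gt hd0)
      omega
    have key := sigma_bound m hm (Fr.image (fun x => (x - a) / d)) ?_ ?_ ?_
    · rwa [Finset.card_image_of_injOn hinjψ] at key
    · intro q hq
      simp only [Finset.mem_image] at hq
      obtain ⟨x, hx, rfl⟩ := hq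
      obtain ⟨h1, h2⟩ := hbounds x hx
      constructor
      · exact Int.ediv_nonneg h1 (le_of_lt hd0)
      · have : (x - a) / d < 2*(m:ℤ)+1 := by
          rw [Int.ediv_lt_iff_lt_mul hd0]
          nlinarith
        omega
    · intro q1 hq1 q2 hq2 hcon
      simp only [Finset.mem_image] at hq1 hq2
      obtain ⟨x, hx, rfl⟩ := hq1
      obtain ⟨y, hy, rfl⟩ := hq2
      have e1 := Int.mul_ediv_add_emod (x - a) d
      have e2 := Int.mul_ediv_add_emod (y - a) d
      have hr1 := (hmemFr x hx).2
      have hr2 := (hmemFr y hy).2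
      have hm1 := Int.emod_nonneg (x - a) (ne_of_gt hd0)
      have hm2 := Int.emod_nonneg (y - a) (ne_of_gt hd0)
      have hm1' := Int.emod_lt_of_pos (x - a) hd0
      have hq' : (x - a)/d = (y - a)/d + m := by omega
      have hmul : d * ((x-a)/d) = d * ((y-a)/d) + d * m := by rw [hq']; ring
      have hdm : d * (m:ℤ) = 2*(k:ℤ) := by rw [hd]; push_cast [hk]; ring
      have hxy : x - y = 2*(k:ℤ) := by omega
      exact hd2k x ((hmemFr x hx).1) y ((hmemFr y hy).1) hxy
    · intro q1 hq1 q2 hq2 hcon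
      simp only [Finset.mem_image] at hq1 hq2
      obtain ⟨x, hx, rfl⟩ := hq1
      obtain ⟨y, hy, rfl⟩ := hq2
      have e1 := Int.mul_ediv_add_emod (x - a) d
      have e2 := Int.mul_ediv_add_emod (y - a) d
      have hr1 := (hmemFr x hx).2
      have hr2 := (hmemFr y hy).2
      have hm1 := Int.emod_nonneg (x - a) (ne_of_gt hd0)
      have hm2 := Int.emod_nonneg (y - a) (ne_of_gt hd0)
      have hq' : (x - a)/d = (y - a)/d + (m+1) := by omega
      have hmul : d * ((x-a)/d) = d * ((y-a)/d) + d * ((m:ℤ)+1) := by rw [hq']; ring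
      have hdm : d * ((m:ℤ)+1) = 2*(k:ℤ) + 2*(L:ℤ) := by rw [hd]; push_cast [hk]; ring
      have hxy : x - y = 2*(k:ℤ) + 2*(L:ℤ) := by omega
      exact hd2kL x ((hmemFr x hx).1) y ((hmemFr y hy).1) hxy
  calc F.card = ∑ r ∈ Finset.range (2*L),
      (F.filter (fun x => ((x - a) % d).toNat = r)).card := hfib
    _ ≤ ∑ _r ∈ Finset.range (2*L), m := Finset.sum_le_sum (fun r _ => hfibbd r)
    _ = 2*L*m := by rw [Finset.sum_const, Finset.card_range, smul_eq_mul]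
    _ = 2*k := by rw [hk]; ring

section WindowHard

lemma neg_one_cast {n : ℕ} (hn : 1 ≤ n) : (((n:ℤ) - 1 : ℤ) : ZMod n) = -1 := by
  push_cast [ZMod.natCast_self]
  ring

lemma window_l3 (k : ℕ) (hk : 4 ≤ k) (h3 : ¬ (3:ℕ) ∣ k) (F : Finset ℤ) (a : ℤ)
    (hFsub : ∀ x ∈ F, a ≤ x ∧ x < a + ((4*k+6 : ℕ) : ℤ))
    (hd1 : ∀ x ∈ F, ∀ y ∈ F, x - y ≠ 1)
    (hd2k : ∀ x ∈ F, ∀ y ∈ F, x - y ≠ 2*(k:ℤ))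
    (hd2k6 : ∀ x ∈ F, ∀ y ∈ F, x - y ≠ 2*(k:ℤ)+6) :
    F.card ≤ 2*k := by
  classical
  have hcop : Nat.Coprime 3 (2*k+3) := by
    have hpr : Nat.Prime 3 := by norm_num
    rw [Nat.Prime.coprime_iff_not_dvd hpr]
    omega
  set n : ℕ := 2*k+3 with hn
  haveI : NeZero n := ⟨by omega⟩
  set u : (ZMod n)ˣ := ZMod.unitOfCoprime 3 hcop with hu
  set w : ZMod n := ((2:ℕ) : ZMod n) * ((u⁻¹ : (ZMod n)ˣ) : ZMod n) with hwdef
  have hucoe : ((u : (ZMod n)ˣ) : ZMod n) = ((3:ℕ) : ZMod n) := ZMod.coe_unitOfCoprime 3 hcop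
  have hw3 : ((3:ℕ) : ZMod n) * w = ((2:ℕ) : ZMod n) := by
    rw [hwdef, ← hucoe]
    calc (u : ZMod n) * (((2:ℕ):ZMod n) * ((u⁻¹ : (ZMod n)ˣ) : ZMod n))
        = ((2:ℕ):ZMod n) * ((u : ZMod n) * ((u⁻¹ : (ZMod n)ˣ) : ZMod n)) := by ring
      _ = ((2:ℕ):ZMod n) := by rw [Units.mul_inv, mul_one]
  -- cancellation keys
  have hkey1 : ∀ b1 b2 : ℤ, w * ((b1:ℤ) : ZMod n) = w * ((b2:ℤ) : ZMod n) + 1 →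
      ((n:ℤ)) ∣ (2*b1 - 2*b2 - 3) := by
    intro b1 b2 h
    have h1 : w * (((b1 - b2 : ℤ)) : ZMod n) = 1 := by
      push_cast
      push_cast at h
      linear_combination h
    have h3' : ((2:ℕ) : ZMod n) * (((b1 - b2 : ℤ)) : ZMod n) = ((3:ℕ) : ZMod n) := by
      calc ((2:ℕ) : ZMod n) * (((b1 - b2 : ℤ)) : ZMod n)
          = ((3:ℕ) : ZMod n) * w * (((b1 - b2 : ℤ)) : ZMod n) := by rw [hw3]
        _ = ((3:ℕ) : ZMod n) * (w * (((b1 - b2 : ℤ)) : ZMod n)) := by ring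
        _ = ((3:ℕ) : ZMod n) := by rw [h1, mul_one]
    have h4 : ((2*b1 - 2*b2 - 3 : ℤ) : ZMod n) = 0 := by
      push_cast
      push_cast at h3'
      linear_combination h3'
    exact (ZMod.intCast_zmod_eq_zero_iff_dvd _ n).mp h4
  have hkey0 : ∀ b1 b2 : ℤ, w * ((b1:ℤ) : ZMod n) = w * ((b2:ℤ) : ZMod n) →
      ((n:ℤ)) ∣ (2*b1 - 2*b2) := by
    intro b1 b2 h
    have h1 : w * (((b1 - b2 : ℤ)) : ZMod n) = 0 := by
      push_cast
      push_cast at h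
      linear_combination h
    have h3' : ((2:ℕ) : ZMod n) * (((b1 - b2 : ℤ)) : ZMod n) = 0 := by
      calc ((2:ℕ) : ZMod n) * (((b1 - b2 : ℤ)) : ZMod n)
          = ((3:ℕ) : ZMod n) * w * (((b1 - b2 : ℤ)) : ZMod n) := by rw [hw3]
        _ = ((3:ℕ) : ZMod n) * (w * (((b1 - b2 : ℤ)) : ZMod n)) := by ring
        _ = 0 := by rw [h1, mul_zero]
    have h4 : ((2*b1 - 2*b2 : ℤ) : ZMod n) = 0 := by
      push_cast
      push_cast at h3'
      linear_combination h3'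
    exact (ZMod.intCast_zmod_eq_zero_iff_dvd _ n).mp h4
  set q : ℤ → ℤ := fun x => (x - a) / 2 with hqdef
  set ψ : ℤ → ZMod n := fun x => w * ((q x : ℤ) : ZMod n) with hψ
  have hbound : ∀ x ∈ F, 0 ≤ x - a ∧ x - a < 2*(n:ℤ) := by
    intro x hx
    obtain ⟨h1, h2⟩ := hFsub x hx
    have : ((4*k+6 : ℕ) : ℤ) = 2*(n:ℤ) := by push_cast [hn]; ring
    omega
  have hqrel : ∀ x ∈ F, x - a = 2 * q x + (x - a) % 2 ∧ 0 ≤ q x ∧ q x < (n:ℤ) := by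
    intro x hx
    obtain ⟨h1, h2⟩ := hbound x hx
    simp only [hqdef]
    omega
  set Fe := F.filter (fun x => (x - a) % 2 = 0) with hFe
  set Fo := F.filter (fun x => (x - a) % 2 = 1) with hFo
  have hFeF : ∀ x ∈ Fe, x ∈ F ∧ (x - a) % 2 = 0 := fun x hx => Finset.mem_filter.mp hx
  have hFoF : ∀ x ∈ Fo, x ∈ F ∧ (x - a) % 2 = 1 := fun x hx => Finset.mem_filter.mp hx
  set X := Fe.image ψ with hXdef
  set Y := Fo.image ψ with hYdef
  -- generic derivation: from ψ x = ψ y get case facts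
  have hcases0 : ∀ x ∈ F, ∀ y ∈ F, ψ x = ψ y →
      2 * q x - 2 * q y = 0 ∨ 2 * q x - 2 * q y = (n:ℤ) ∨ 2 * q x - 2 * q y = -(n:ℤ) := by
    intro x hx y hy h
    have hdvd := hkey0 (q x) (q y) (by simpa [hψ] using h)
    obtain ⟨_, hx1, hx2⟩ := hqrel x hx
    obtain ⟨_, hy1, hy2⟩ := hqrel y hy
    rcases dvd_cases5 (by omega : 0 < n) hdvd (by omega) (by omega) with h|h|h|h|h <;> omega
  -- independence of X
  have hXind : ∀ x' ∈ X, x' + 1 ∉ X := by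
    intro x' hx' hmem
    simp only [hXdef, Finset.mem_image] at hx' hmem
    obtain ⟨x1, hx1, rfl⟩ := hx'
    obtain ⟨x2, hx2, hx2e⟩ := hmem
    have hdvd := hkey1 (q x2) (q x1) (by simpa [hψ] using hx2e)
    obtain ⟨hr1, hq11, hq12⟩ := hqrel x1 (hFeF x1 hx1).1
    obtain ⟨hr2, hq21, hq22⟩ := hqrel x2 (hFeF x2 hx2).1
    have hp1 := (hFeF x1 hx1).2
    have hp2 := (hFeF x2 hx2).2
    rcases dvd_cases5 (by omega : 0 < n) hdvd (by omega) (by omega) with h|h|h|h|h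
    · omega
    · -- 2 q2 - 2 q1 - 3 = -n : x1 - x2 = 2k
      exact hd2k x1 (hFeF x1 hx1).1 x2 (hFeF x2 hx2).1 (by omega)
    · omega
    · -- = n : x2 - x1 = 2k+6
      exact hd2k6 x2 (hFeF x2 hx2).1 x1 (hFeF x1 hx1).1 (by omega)
    · omega
  have hYind : ∀ y' ∈ Y, y' + 1 ∉ Y := by
    intro y' hy' hmem
    simp only [hYdef, Finset.mem_image] at hy' hmem
    obtain ⟨x1, hx1, rfl⟩ := hy'
    obtain ⟨x2, hx2, hx2e⟩ := hmem
    have hdvd := hkey1 (q x2) (q x1) (by simpa [hψ] using hx2e)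
    obtain ⟨hr1, hq11, hq12⟩ := hqrel x1 (hFoF x1 hx1).1
    obtain ⟨hr2, hq21, hq22⟩ := hqrel x2 (hFoF x2 hx2).1
    have hp1 := (hFoF x1 hx1).2
    have hp2 := (hFoF x2 hx2).2
    rcases dvd_cases5 (by omega : 0 < n) hdvd (by omega) (by omega) with h|h|h|h|h
    · omega
    · exact hd2k x1 (hFoF x1 hx1).1 x2 (hFoF x2 hx2).1 (by omega)
    · omega
    · exact hd2k6 x2 (hFoF x2 hx2).1 x1 (hFoF x1 hx1).1 (by omega)
    · omega
  have hXY : ∀ x' ∈ X, x' ∉ Y := by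
    intro x' hx' hmem
    simp only [hXdef, Finset.mem_image] at hx'
    simp only [hYdef, Finset.mem_image] at hmem
    obtain ⟨x, hx, rfl⟩ := hx'
    obtain ⟨y, hy, hye⟩ := hmem
    obtain ⟨hr1, hq11, hq12⟩ := hqrel x (hFeF x hx).1
    obtain ⟨hr2, hq21, hq22⟩ := hqrel y (hFoF y hy).1
    have hp1 := (hFeF x hx).2
    have hp2 := (hFoF y hy).2
    rcases hcases0 y (hFoF y hy).1 x (hFeF x hx).1 hye with h|h|h
    · -- q y = q x : y - x = 1
      exact hd1 y (hFoF y hy).1 x (hFeF x hx).1 (by omega)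
    · omega
    · omega
  have hcross : ∀ y' ∈ Y, y' ≠ -w → y' + w ∉ X := by
    intro y' hy' hne hmem
    simp only [hYdef, Finset.mem_image] at hy'
    obtain ⟨y, hy, rfl⟩ := hy'
    simp only [hXdef, Finset.mem_image] at hmem
    obtain ⟨x, hx, hxe⟩ := hmem
    -- ψ x = ψ y + w = w * (q y + 1)
    have hstep : w * ((q x : ℤ) : ZMod n) = w * (((q y + 1 : ℤ)) : ZMod n) := by
      simp only [hψ] at hxe
      push_cast
      push_cast at hxe
      linear_combination hxe
    have hdvd := hkey0 (q x) (q y + 1) hstep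
    obtain ⟨hr1, hq11, hq12⟩ := hqrel x (hFeF x hx).1
    obtain ⟨hr2, hq21, hq22⟩ := hqrel y (hFoF y hy).1
    have hp1 := (hFeF x hx).2
    have hp2 := (hFoF y hy).2
    rcases dvd_cases5 (by omega : 0 < n) hdvd (by omega) (by omega) with h|h|h|h|h
    · -- -2n : q y = n - 1, q x = 0 : y' = -w
      apply hne
      have hqy : q y = (n:ℤ) - 1 := by omega
      simp only [hψ]
      rw [hqy, neg_one_cast (by omega)]
      ring
    · omega
    · -- 0 : x - y = 1
      exact hd1 x (hFeF x hx).1 y (hFoF y hy).1 (by omega)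
    · omega
    · omega
  -- cardinalities
  have hinjE : Set.InjOn ψ Fe := by
    intro x hx y hy h
    have hxF := (hFeF x (Finset.mem_coe.mp hx)).1
    have hyF := (hFeF y (Finset.mem_coe.mp hy)).1
    obtain ⟨hr1, hq11, hq12⟩ := hqrel x hxF
    obtain ⟨hr2, hq21, hq22⟩ := hqrel y hyF
    have hp1 := (hFeF x (Finset.mem_coe.mp hx)).2
    have hp2 := (hFeF y (Finset.mem_coe.mp hy)).2
    rcases hcases0 x hxF y hyF h with h'|h'|h' <;> omega
  have hinjO : Set.InjOn ψ Fo := by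
    intro x hx y hy h
    have hxF := (hFoF x (Finset.mem_coe.mp hx)).1
    have hyF := (hFoF y (Finset.mem_coe.mp hy)).1
    obtain ⟨hr1, hq11, hq12⟩ := hqrel x hxF
    obtain ⟨hr2, hq21, hq22⟩ := hqrel y hyF
    have hp1 := (hFoF x (Finset.mem_coe.mp hx)).2
    have hp2 := (hFoF y (Finset.mem_coe.mp hy)).2
    rcases hcases0 x hxF y hyF h with h'|h'|h' <;> omega
  have hXcard : X.card = Fe.card := Finset.card_image_of_injOn hinjE
  have hYcard : Y.card = Fo.card := Finset.card_image_of_injOn hinjO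
  have hsplit : Fe.card + Fo.card = F.card := by
    have hset : Fo = Finset.filter (fun x => ¬ (x - a) % 2 = 0) F := by
      rw [hFo]
      apply Finset.filter_congr
      intro x _
      omega
    rw [hFe, hset]
    exact Finset.card_filter_add_card_filter_not (p := fun x => (x - a) % 2 = 0)
  have hfinal := core3 n k hk hn w hw3 X Y hXind hYind hXY hcross
  omega

lemma window_l2 (k : ℕ) (hk : 3 ≤ k) (hkodd : k % 2 = 1) (F : Finset ℤ) (a : ℤ)
    (hFsub : ∀ x ∈ F, a ≤ x ∧ x < a + ((4*k+4 : ℕ) : ℤ))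
    (hd1 : ∀ x ∈ F, ∀ y ∈ F, x - y ≠ 1)
    (hd2k : ∀ x ∈ F, ∀ y ∈ F, x - y ≠ 2*(k:ℤ))
    (hd2k4 : ∀ x ∈ F, ∀ y ∈ F, x - y ≠ 2*(k:ℤ)+4) :
    F.card ≤ 2*k := by
  classical
  have hcop : Nat.Coprime k (2*k+2) := by
    have h2 : (2*k+2) = 2 + k*2 := by ring
    rw [h2, Nat.coprime_add_mul_left_right]
    exact Nat.coprime_two_right.mpr (Nat.odd_iff.mpr hkodd)
  set n : ℕ := 2*k+2 with hn
  haveI : NeZero n := ⟨by omega⟩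
  set u : (ZMod n)ˣ := ZMod.unitOfCoprime k hcop with hu
  set w : ZMod n := ((u⁻¹ : (ZMod n)ˣ) : ZMod n) with hwdef
  have hucoe : ((u : (ZMod n)ˣ) : ZMod n) = ((k:ℕ) : ZMod n) := ZMod.coe_unitOfCoprime k hcop
  have hw : ((k:ℕ) : ZMod n) * w = 1 := by
    rw [hwdef, ← hucoe]
    exact Units.mul_inv u
  have hkey1 : ∀ b1 b2 : ℤ, w * ((b1:ℤ) : ZMod n) = w * ((b2:ℤ) : ZMod n) + 1 →
      ((n:ℤ)) ∣ (b1 - b2 - k) := by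
    intro b1 b2 h
    have h1 : w * (((b1 - b2 : ℤ)) : ZMod n) = 1 := by
      push_cast
      push_cast at h
      linear_combination h
    have h3 : (((b1 - b2 : ℤ)) : ZMod n) = ((k:ℕ) : ZMod n) := by
      calc (((b1 - b2 : ℤ)) : ZMod n)
          = (((k:ℕ) : ZMod n) * w) * (((b1 - b2 : ℤ)) : ZMod n) := by rw [hw]; ring
        _ = ((k:ℕ) : ZMod n) * (w * (((b1 - b2 : ℤ)) : ZMod n)) := by ring
        _ = ((k:ℕ) : ZMod n) := by rw [h1, mul_one]
    have h4 : ((b1 - b2 - k : ℤ) : ZMod n) = 0 := by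
      push_cast
      push_cast at h3
      linear_combination h3
    exact (ZMod.intCast_zmod_eq_zero_iff_dvd _ n).mp h4
  have hkey0 : ∀ b1 b2 : ℤ, w * ((b1:ℤ) : ZMod n) = w * ((b2:ℤ) : ZMod n) →
      ((n:ℤ)) ∣ (b1 - b2) := by
    intro b1 b2 h
    have h1 : w * (((b1 - b2 : ℤ)) : ZMod n) = 0 := by
      push_cast
      push_cast at h
      linear_combination h
    have h3 : (((b1 - b2 : ℤ)) : ZMod n) = 0 := by
      calc (((b1 - b2 : ℤ)) : ZMod n)
          = (((k:ℕ) : ZMod n) * w) * (((b1 - b2 : ℤ)) : ZMod n) := by rw [hw]; ring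
        _ = ((k:ℕ) : ZMod n) * (w * (((b1 - b2 : ℤ)) : ZMod n)) := by ring
        _ = 0 := by rw [h1, mul_zero]
    exact (ZMod.intCast_zmod_eq_zero_iff_dvd _ n).mp h3
  set q : ℤ → ℤ := fun x => (x - a) / 2 with hqdef
  set ψ : ℤ → ZMod n := fun x => w * ((q x : ℤ) : ZMod n) with hψ
  have hbound : ∀ x ∈ F, 0 ≤ x - a ∧ x - a < 2*(n:ℤ) := by
    intro x hx
    obtain ⟨h1, h2⟩ := hFsub x hx
    have : ((4*k+4 : ℕ) : ℤ) = 2*(n:ℤ) := by push_cast [hn]; ring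
    omega
  have hqrel : ∀ x ∈ F, x - a = 2 * q x + (x - a) % 2 ∧ 0 ≤ q x ∧ q x < (n:ℤ) := by
    intro x hx
    obtain ⟨h1, h2⟩ := hbound x hx
    simp only [hqdef]
    omega
  set Fe := F.filter (fun x => (x - a) % 2 = 0) with hFe
  set Fo := F.filter (fun x => (x - a) % 2 = 1) with hFo
  have hFeF : ∀ x ∈ Fe, x ∈ F ∧ (x - a) % 2 = 0 := fun x hx => Finset.mem_filter.mp hx
  have hFoF : ∀ x ∈ Fo, x ∈ F ∧ (x - a) % 2 = 1 := fun x hx => Finset.mem_filter.mp hx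
  set X := Fe.image ψ with hXdef
  set Y := Fo.image ψ with hYdef
  have hcases0 : ∀ x ∈ F, ∀ y ∈ F, ψ x = ψ y → q x = q y := by
    intro x hx y hy h
    have hdvd := hkey0 (q x) (q y) (by simpa [hψ] using h)
    obtain ⟨_, hx1, hx2⟩ := hqrel x hx
    obtain ⟨_, hy1, hy2⟩ := hqrel y hy
    rcases dvd_cases5 (by omega : 0 < n) hdvd (by omega) (by omega) with h|h|h|h|h <;> omega
  have hXind : ∀ x' ∈ X, x' + 1 ∉ X := by
    intro x' hx' hmem
    simp only [hXdef, Finset.mem_image] at hx' hmem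
    obtain ⟨x1, hx1, rfl⟩ := hx'
    obtain ⟨x2, hx2, hx2e⟩ := hmem
    have hdvd := hkey1 (q x2) (q x1) (by simpa [hψ] using hx2e)
    obtain ⟨hr1, hq11, hq12⟩ := hqrel x1 (hFeF x1 hx1).1
    obtain ⟨hr2, hq21, hq22⟩ := hqrel x2 (hFeF x2 hx2).1
    have hp1 := (hFeF x1 hx1).2
    have hp2 := (hFeF x2 hx2).2
    rcases dvd_cases5 (by omega : 0 < n) hdvd (by omega) (by omega) with h|h|h|h|h
    · omega
    · exact hd2k4 x1 (hFeF x1 hx1).1 x2 (hFeF x2 hx2).1 (by omega)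
    · exact hd2k x2 (hFeF x2 hx2).1 x1 (hFeF x1 hx1).1 (by omega)
    · omega
    · omega
  have hYind : ∀ y' ∈ Y, y' + 1 ∉ Y := by
    intro y' hy' hmem
    simp only [hYdef, Finset.mem_image] at hy' hmem
    obtain ⟨x1, hx1, rfl⟩ := hy'
    obtain ⟨x2, hx2, hx2e⟩ := hmem
    have hdvd := hkey1 (q x2) (q x1) (by simpa [hψ] using hx2e)
    obtain ⟨hr1, hq11, hq12⟩ := hqrel x1 (hFoF x1 hx1).1
    obtain ⟨hr2, hq21, hq22⟩ := hqrel x2 (hFoF x2 hx2).1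
    have hp1 := (hFoF x1 hx1).2
    have hp2 := (hFoF x2 hx2).2
    rcases dvd_cases5 (by omega : 0 < n) hdvd (by omega) (by omega) with h|h|h|h|h
    · omega
    · exact hd2k4 x1 (hFoF x1 hx1).1 x2 (hFoF x2 hx2).1 (by omega)
    · exact hd2k x2 (hFoF x2 hx2).1 x1 (hFoF x1 hx1).1 (by omega)
    · omega
    · omega
  have hXY : ∀ x' ∈ X, x' ∉ Y := by
    intro x' hx' hmem
    simp only [hXdef, Finset.mem_image] at hx'
    simp only [hYdef, Finset.mem_image] at hmem
    obtain ⟨x, hx, rfl⟩ := hx'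
    obtain ⟨y, hy, hye⟩ := hmem
    obtain ⟨hr1, hq11, hq12⟩ := hqrel x (hFeF x hx).1
    obtain ⟨hr2, hq21, hq22⟩ := hqrel y (hFoF y hy).1
    have hp1 := (hFeF x hx).2
    have hp2 := (hFoF y hy).2
    have h := hcases0 y (hFoF y hy).1 x (hFeF x hx).1 hye
    exact hd1 y (hFoF y hy).1 x (hFeF x hx).1 (by omega)
  have hcross : ∀ y' ∈ Y, y' ≠ -w → y' + w ∉ X := by
    intro y' hy' hne hmem
    simp only [hYdef, Finset.mem_image] at hy'
    obtain ⟨y, hy, rfl⟩ := hy'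
    simp only [hXdef, Finset.mem_image] at hmem
    obtain ⟨x, hx, hxe⟩ := hmem
    have hstep : w * ((q x : ℤ) : ZMod n) = w * (((q y + 1 : ℤ)) : ZMod n) := by
      simp only [hψ] at hxe
      push_cast
      push_cast at hxe
      linear_combination hxe
    have hdvd := hkey0 (q x) (q y + 1) hstep
    obtain ⟨hr1, hq11, hq12⟩ := hqrel x (hFeF x hx).1
    obtain ⟨hr2, hq21, hq22⟩ := hqrel y (hFoF y hy).1
    have hp1 := (hFeF x hx).2
    have hp2 := (hFoF y hy).2
    rcases dvd_cases5 (by omega : 0 < n) hdvd (by omega) (by omega) with h|h|h|h|h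
    · omega
    · apply hne
      have hqy : q y = (n:ℤ) - 1 := by omega
      simp only [hψ]
      rw [hqy, neg_one_cast (by omega)]
      ring
    · exact hd1 x (hFeF x hx).1 y (hFoF y hy).1 (by omega)
    · omega
    · omega
  have hinjE : Set.InjOn ψ Fe := by
    intro x hx y hy h
    have hxF := (hFeF x (Finset.mem_coe.mp hx)).1
    have hyF := (hFeF y (Finset.mem_coe.mp hy)).1
    obtain ⟨hr1, hq11, hq12⟩ := hqrel x hxF
    obtain ⟨hr2, hq21, hq22⟩ := hqrel y hyF
    have hp1 := (hFeF x (Finset.mem_coe.mp hx)).2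
    have hp2 := (hFeF y (Finset.mem_coe.mp hy)).2
    have h' := hcases0 x hxF y hyF h
    omega
  have hinjO : Set.InjOn ψ Fo := by
    intro x hx y hy h
    have hxF := (hFoF x (Finset.mem_coe.mp hx)).1
    have hyF := (hFoF y (Finset.mem_coe.mp hy)).1
    obtain ⟨hr1, hq11, hq12⟩ := hqrel x hxF
    obtain ⟨hr2, hq21, hq22⟩ := hqrel y hyF
    have hp1 := (hFoF x (Finset.mem_coe.mp hx)).2
    have hp2 := (hFoF y (Finset.mem_coe.mp hy)).2
    have h' := hcases0 x hxF y hyF h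
    omega
  have hXcard : X.card = Fe.card := Finset.card_image_of_injOn hinjE
  have hYcard : Y.card = Fo.card := Finset.card_image_of_injOn hinjO
  have hsplit : Fe.card + Fo.card = F.card := by
    have hset : Fo = Finset.filter (fun x => ¬ (x - a) % 2 = 0) F := by
      rw [hFo]
      apply Finset.filter_congr
      intro x _
      omega
    rw [hFe, hset]
    exact Finset.card_filter_add_card_filter_not (p := fun x => (x - a) % 2 = 0)
  have hfinal := core2 n k hk hkodd hn w hw X Y hXind hYind hXY hcross
  omega

end WindowHard

lemma exists_window (p : ℕ) (hp : 0 < p) (y : ℤ) (hy0 : 0 ≤ y) (q : ℕ) (hq : y < (q:ℤ)*p) :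
    ∃ j : ℕ, j < q ∧ (j:ℤ)*p ≤ y ∧ y < (j:ℤ)*p + p := by
  have hp' : (0:ℤ) < p := by exact_mod_cast hp
  have h1 : 0 ≤ y / p := Int.ediv_nonneg hy0 (le_of_lt hp')
  have h2 := Int.mul_ediv_add_emod y p
  have h3 := Int.emod_nonneg y (ne_of_gt hp')
  have h4 := Int.emod_lt_of_pos y hp'
  refine ⟨(y / (p:ℤ)).toNat, ?_, ?_, ?_⟩
  · have h5 : y / (p:ℤ) < q := by rw [Int.ediv_lt_iff_lt_mul hp']; exact hq
    omega
  · rw [Int.toNat_of_nonneg h1, mul_comm]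
    omega
  · rw [Int.toNat_of_nonneg h1, mul_comm]
    omega

lemma count_le (k p : ℕ) (hp : 0 < p) (A : Set ℤ)
    (hwin : ∀ a : ℤ, (A ∩ Set.Ico a (a + (p:ℤ))).ncard ≤ 2*k) (N : ℕ) :
    (A ∩ Set.Icc (-(N:ℤ)) N).ncard ≤ 2*k * ((2*N+p)/p) := by
  classical
  set q := (2*N+p)/p with hqdef
  have hfin : (A ∩ Set.Icc (-(N:ℤ)) N).Finite :=
    (Set.finite_Icc _ _).subset Set.inter_subset_right
  have hwfin : ∀ j : ℕ, (A ∩ Set.Ico ((-(N:ℤ)) + j*p) ((-(N:ℤ)) + j*p + p)).Finite :=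
    fun j => (Set.finite_Ico _ _).subset Set.inter_subset_right
  rw [Set.ncard_eq_toFinset_card _ hfin]
  have hqp : 2*N+1 ≤ p * q := by
    have h1 := Nat.div_add_mod (2*N+p) p
    rw [← hqdef] at h1
    have h2 : (2*N+p) % p < p := Nat.mod_lt _ hp
    omega
  have hsub : hfin.toFinset ⊆ (Finset.range q).biUnion (fun j => (hwfin j).toFinset) := by
    intro x hx
    rw [Set.Finite.mem_toFinset] at hx
    obtain ⟨hxA, hx1⟩ := hx
    rw [Set.mem_Icc] at hx1
    have hq' : x + (N:ℤ) < (q:ℤ)*p := by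
      rw [mul_comm]
      have h3 : ((2*N+1 : ℕ) : ℤ) ≤ ((p*q : ℕ) : ℤ) := by exact_mod_cast hqp
      push_cast at h3
      omega
    obtain ⟨j, hj, hj1, hj2⟩ := exists_window p hp (x + N) (by omega) q hq'
    refine Finset.mem_biUnion.mpr ⟨j, Finset.mem_range.mpr hj, ?_⟩
    rw [Set.Finite.mem_toFinset]
    refine ⟨hxA, ?_⟩
    rw [Set.mem_Ico]
    constructor
    · omega
    · omega
  calc hfin.toFinset.card ≤ ((Finset.range q).biUnion (fun j => (hwfin j).toFinset)).card :=
        Finset.card_le_card hsub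
    _ ≤ ∑ j ∈ Finset.range q, ((hwfin j).toFinset).card := Finset.card_biUnion_le
    _ ≤ ∑ _j ∈ Finset.range q, 2*k := by
        apply Finset.sum_le_sum
        intro j _
        rw [← Set.ncard_eq_toFinset_card _ (hwfin j)]
        exact hwin _
    _ = q * (2*k) := by rw [Finset.sum_const, Finset.card_range, smul_eq_mul]
    _ = 2*k * q := by ring

section Construction

variable (ℓ k : ℕ)

def perSet : Set ℤ :=
  {x : ℤ | (x % ((4*k+2*ℓ : ℕ) : ℤ)) % 2 = 0 ∧ x % ((4*k+2*ℓ : ℕ) : ℤ) < 2*k ∨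
    (x % ((4*k+2*ℓ : ℕ) : ℤ)) % 2 = 1 ∧ 2*k < x % ((4*k+2*ℓ : ℕ) : ℤ) ∧
      x % ((4*k+2*ℓ : ℕ) : ℤ) < 4*k}

lemma perSet_indep (hℓ1 : 1 ≤ ℓ) (hℓ3 : ℓ ≤ 3) (hk : ℓ ≤ k) :
    IsIndepSet ({1, 2*k, 2*k+2*ℓ} : Finset ℕ) (perSet ℓ k) := by
  intro x hx y hy hne hmem
  simp only [perSet, Set.mem_setOf_eq] at hx hy
  simp only [Finset.mem_insert, Finset.mem_singleton] at hmem
  set p : ℤ := ((4*k+2*ℓ : ℕ) : ℤ) with hpdef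
  have hp0 : (0:ℤ) < p := by rw [hpdef]; push_cast; omega
  have hdvd : p ∣ ((x - y) - (x % p - y % p)) := by
    refine ⟨x/p - y/p, ?_⟩
    have h1 := Int.mul_ediv_add_emod x p
    have h2 := Int.mul_ediv_add_emod y p
    rw [mul_sub]
    omega
  have hxr := Int.emod_nonneg x (ne_of_gt hp0)
  have hxr2 := Int.emod_lt_of_pos x hp0
  have hyr := Int.emod_nonneg y (ne_of_gt hp0)
  have hyr2 := Int.emod_lt_of_pos y hp0
  have hdvd' : (((4*k+2*ℓ : ℕ) : ℤ)) ∣ ((x - y) - (x % p - y % p)) := by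
    rw [← hpdef]; exact hdvd
  have hcases := dvd_cases5 (n := 4*k+2*ℓ) (by omega) hdvd'
    (by push_cast; omega) (by push_cast; omega)
  rcases hcases with h|h|h|h|h <;> push_cast at h <;> omega

def Wfin (j : ℤ) : Finset ℤ :=
  ((Finset.range k).image (fun i : ℕ => j*((4*k+2*ℓ : ℕ) : ℤ) + 2*(i:ℤ))) ∪
  ((Finset.range k).image (fun i : ℕ => j*((4*k+2*ℓ : ℕ) : ℤ) + (2*(k:ℤ)+1+2*(i:ℤ))))

lemma Wfin_card (hℓ1 : 1 ≤ ℓ) (j : ℤ) : (Wfin ℓ k j).card = 2*k := by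
  classical
  rw [Wfin, Finset.card_union_of_disjoint, Finset.card_image_of_injOn,
    Finset.card_image_of_injOn, Finset.card_range]
  · ring
  · intro a ha b hb hab
    simp only [Finset.coe_range, Set.mem_Iio] at ha hb
    simp only [] at hab
    omega
  · intro a ha b hb hab
    simp only [Finset.coe_range, Set.mem_Iio] at ha hb
    simp only [] at hab
    omega
  · rw [Finset.disjoint_left]
    intro z hz hz2
    simp only [Finset.mem_image, Finset.mem_range] at hz hz2
    obtain ⟨i, hi, rfl⟩ := hz
    obtain ⟨i', hi', h⟩ := hz2
    omega

lemma Wfin_mem (hℓ1 : 1 ≤ ℓ) (hk : ℓ ≤ k) (j : ℤ) (x : ℤ) (hx : x ∈ Wfin ℓ k j) :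
    x ∈ perSet ℓ k ∧ j*((4*k+2*ℓ : ℕ) : ℤ) ≤ x ∧ x < j*((4*k+2*ℓ : ℕ) : ℤ) + ((4*k+2*ℓ : ℕ) : ℤ) := by
  classical
  set p : ℤ := ((4*k+2*ℓ : ℕ) : ℤ) with hpdef
  have hp0 : (0:ℤ) < p := by rw [hpdef]; push_cast; omega
  have hmain : ∃ t : ℤ, x = j*p + t ∧ 0 ≤ t ∧ t < p ∧
      ((t % 2 = 0 ∧ t < 2*k) ∨ (t % 2 = 1 ∧ 2*k < t ∧ t < 4*k)) := by
    rw [Wfin] at hx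
    simp only [Finset.mem_union, Finset.mem_image, Finset.mem_range] at hx
    rcases hx with ⟨i, hi, rfl⟩ | ⟨i, hi, rfl⟩
    · exact ⟨2*(i:ℤ), by ring, by omega, by rw [hpdef]; push_cast; omega,
        Or.inl ⟨by omega, by omega⟩⟩
    · exact ⟨2*(k:ℤ)+1+2*(i:ℤ), by ring, by omega, by rw [hpdef]; push_cast; omega,
        Or.inr ⟨by omega, by omega, by omega⟩⟩
  obtain ⟨t, rfl, ht0, ht1, ht2⟩ := hmain
  have hmod : (j*p + t) % p = t := by
    rw [add_comm, mul_comm j p, Int.add_mul_emod_self_left]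
    exact Int.emod_eq_of_lt ht0 ht1
  refine ⟨?_, by omega, by omega⟩
  simp only [perSet, Set.mem_setOf_eq]
  rw [← hpdef, hmod]
  rcases ht2 with ⟨h1, h2⟩ | ⟨h1, h2, h3⟩
  · left; exact ⟨h1, by exact_mod_cast h2⟩
  · right; exact ⟨h1, by exact_mod_cast h2, by exact_mod_cast h3⟩

lemma count_ge (hℓ1 : 1 ≤ ℓ) (hk : ℓ ≤ k) (N : ℕ) :
    2*k * (2*(N/(4*k+2*ℓ))) ≤ ((perSet ℓ k) ∩ Set.Icc (-(N:ℤ)) N).ncard := by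
  classical
  set p : ℤ := ((4*k+2*ℓ : ℕ) : ℤ) with hpdef
  have hp0 : (0:ℤ) < p := by rw [hpdef]; push_cast; omega
  set M : ℕ := N/(4*k+2*ℓ) with hMdef
  have hMp : (M:ℤ)*p ≤ N := by
    have h1 : M*(4*k+2*ℓ) ≤ N := Nat.div_mul_le_self N (4*k+2*ℓ)
    have h2 : ((M*(4*k+2*ℓ) : ℕ) : ℤ) ≤ ((N:ℕ):ℤ) := by exact_mod_cast h1
    push_cast at h2
    rw [hpdef]
    push_cast
    nlinarith
  have hfin : ((perSet ℓ k) ∩ Set.Icc (-(N:ℤ)) N).Finite :=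
    (Set.finite_Icc _ _).subset Set.inter_subset_right
  rw [Set.ncard_eq_toFinset_card _ hfin]
  set B := (Finset.Ico (-(M:ℤ)) (M:ℤ)).biUnion (fun j => Wfin ℓ k j) with hBdef
  have hWloc : ∀ j : ℤ, ∀ x ∈ Wfin ℓ k j, j*p ≤ x ∧ x < j*p + p := by
    intro j x hx
    have := Wfin_mem ℓ k hℓ1 hk j x hx
    rw [← hpdef] at this
    exact ⟨this.2.1, this.2.2⟩
  have hsub : B ⊆ hfin.toFinset := by
    intro x hx
    rw [hBdef, Finset.mem_biUnion] at hx
    obtain ⟨j, hj, hxj⟩ := hx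
    rw [Finset.mem_Ico] at hj
    obtain ⟨hper, hx1, hx2⟩ := Wfin_mem ℓ k hℓ1 hk j x hxj
    rw [← hpdef] at hx1 hx2
    rw [Set.Finite.mem_toFinset]
    refine ⟨hper, ?_⟩
    rw [Set.mem_Icc]
    constructor
    · have : (-(M:ℤ))*p ≤ j*p := mul_le_mul_of_nonneg_right hj.1 (le_of_lt hp0)
      have h2 : (-(M:ℤ))*p = -((M:ℤ)*p) := by ring
      omega
    · have h1 : (j+1) ≤ (M:ℤ) := by omega
      have : (j+1)*p ≤ (M:ℤ)*p := mul_le_mul_of_nonneg_right h1 (le_of_lt hp0)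
      have h2 : (j+1)*p = j*p + p := by ring
      omega
  have hdisj : ∀ j1 ∈ Finset.Ico (-(M:ℤ)) (M:ℤ), ∀ j2 ∈ Finset.Ico (-(M:ℤ)) (M:ℤ),
      j1 ≠ j2 → Disjoint (Wfin ℓ k j1) (Wfin ℓ k j2) := by
    intro j1 _ j2 _ hne
    rw [Finset.disjoint_left]
    intro x hx1 hx2
    obtain ⟨ha1, ha2⟩ := hWloc j1 x hx1
    obtain ⟨hb1, hb2⟩ := hWloc j2 x hx2
    apply hne
    have h1 : j1*p < (j2+1)*p := by have : (j2+1)*p = j2*p + p := by ring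
                                    omega
    have h2 : j2*p < (j1+1)*p := by have : (j1+1)*p = j1*p + p := by ring
                                    omega
    have h3 : j1 < j2+1 := lt_of_mul_lt_mul_right h1 (le_of_lt hp0)
    have h4 : j2 < j1+1 := lt_of_mul_lt_mul_right h2 (le_of_lt hp0)
    omega
  have hBcard : B.card = 2*M * (2*k) := by
    rw [hBdef, Finset.card_biUnion hdisj]
    have : ∀ j ∈ Finset.Ico (-(M:ℤ)) (M:ℤ), (Wfin ℓ k j).card = 2*k :=
      fun j _ => Wfin_card ℓ k hℓ1 j
    rw [Finset.sum_congr rfl this, Finset.sum_const, Int.card_Ico, smul_eq_mul]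
    congr 1
    omega
  calc 2*k * (2*M) = 2*M * (2*k) := by ring
    _ = B.card := hBcard.symm
    _ ≤ hfin.toFinset.card := Finset.card_le_card hsub

end Construction


lemma tendsto_ratio (c a : ℝ) :
    Tendsto (fun N : ℕ => (c*(N:ℝ) + a)/(2*(N:ℝ)+1)) atTop (𝓝 (c/2)) := by
  have h0 : Tendsto (fun N : ℕ => (c + a*(1/(N:ℝ)))/(2 + 1*(1/(N:ℝ)))) atTop
      (𝓝 ((c + a*0)/(2 + 1*0))) := by
    apply Tendsto.div
    · exact tendsto_const_nhds.add (tendsto_one_div_atTop_nhds_zero_nat.const_mul a)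
    · exact tendsto_const_nhds.add (tendsto_one_div_atTop_nhds_zero_nat.const_mul 1)
    · norm_num
  have h1 : ((c + a*0)/(2 + 1*0)) = c/2 := by norm_num
  rw [h1] at h0
  apply Tendsto.congr' _ h0
  filter_upwards [eventually_ge_atTop 1] with N hN
  have hN0 : (0:ℝ) < (N:ℝ) := by exact_mod_cast hN
  have hd1 : (2:ℝ) + 1*(1/(N:ℝ)) ≠ 0 := by positivity
  have hd2 : (2:ℝ)*(N:ℝ)+1 ≠ 0 := by positivity
  field_simp

lemma limsup_le_of_le_tendsto (f g : ℕ → ℝ) (v : ℝ)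
    (hfg : ∀ N, f N ≤ g N) (hg : Tendsto g atTop (𝓝 v)) (hf0 : ∀ N, 0 ≤ f N) :
    limsup f atTop ≤ v := by
  have h1 : IsCoboundedUnder (· ≤ ·) atTop f := by
    apply Filter.IsBoundedUnder.isCoboundedUnder_le
    exact isBoundedUnder_of ⟨0, fun N => hf0 N⟩
  have h2 : IsBoundedUnder (· ≤ ·) atTop g := hg.isBoundedUnder_le
  calc limsup f atTop ≤ limsup g atTop :=
        limsup_le_limsup (Eventually.of_forall hfg) h1 h2
    _ = v := hg.limsup_eq

lemma le_limsup_of_tendsto_le (f h : ℕ → ℝ) (v : ℝ)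
    (hfg : ∀ N, h N ≤ f N) (hh : Tendsto h atTop (𝓝 v)) (hf0 : ∀ N, 0 ≤ f N)
    (hfub : IsBoundedUnder (· ≤ ·) atTop f) :
    v ≤ limsup f atTop := by
  have hlb : IsBoundedUnder (· ≥ ·) atTop f := isBoundedUnder_of ⟨0, fun N => hf0 N⟩
  calc v = liminf h atTop := hh.liminf_eq.symm
    _ ≤ liminf f atTop :=
        liminf_le_liminf (Eventually.of_forall hfg) hh.isBoundedUnder_ge
          hfub.isCoboundedUnder_ge
    _ ≤ limsup f atTop := liminf_le_limsup hfub hlb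

lemma isBoundedUnder_of_le_tendsto (f g : ℕ → ℝ) (v : ℝ)
    (hfg : ∀ N, f N ≤ g N) (hg : Tendsto g atTop (𝓝 v)) :
    IsBoundedUnder (· ≤ ·) atTop f :=
  hg.isBoundedUnder_le.mono_le (Eventually.of_forall hfg)



lemma window_bound (ℓ k : ℕ) (hℓ1 : 1 ≤ ℓ) (hℓ3 : ℓ ≤ 3) (hk : ℓ ≤ k)
    (A : Set ℤ) (hA : IsIndepSet ({1, 2*k, 2*k+2*ℓ} : Finset ℕ) A) (a : ℤ) :
    (A ∩ Set.Ico a (a + ((4*k+2*ℓ : ℕ) : ℤ))).ncard ≤ 2*k := by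
  classical
  have hfin : (A ∩ Set.Ico a (a + ((4*k+2*ℓ:ℕ):ℤ))).Finite :=
    (Set.finite_Ico _ _).subset Set.inter_subset_right
  rw [Set.ncard_eq_toFinset_card _ hfin]
  set F := hfin.toFinset with hF
  have hFsub : ∀ x ∈ F, a ≤ x ∧ x < a + ((4*k+2*ℓ:ℕ):ℤ) := by
    intro x hx
    rw [hF, Set.Finite.mem_toFinset] at hx
    exact Set.mem_Ico.mp hx.2
  have hFA : ∀ x ∈ F, x ∈ A := by
    intro x hx
    rw [hF, Set.Finite.mem_toFinset] at hx
    exact hx.1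
  have hd1 : ∀ x ∈ F, ∀ y ∈ F, x - y ≠ 1 := by
    intro x hx y hy h
    have hne : x ≠ y := by omega
    have hm := hA x (hFA x hx) y (hFA y hy) hne
    simp only [Finset.mem_insert, Finset.mem_singleton, not_or] at hm
    omega
  have hd2k : ∀ x ∈ F, ∀ y ∈ F, x - y ≠ 2*(k:ℤ) := by
    intro x hx y hy h
    have hne : x ≠ y := by omega
    have hm := hA x (hFA x hx) y (hFA y hy) hne
    simp only [Finset.mem_insert, Finset.mem_singleton, not_or] at hm
    omega
  have hd2kL : ∀ x ∈ F, ∀ y ∈ F, x - y ≠ 2*(k:ℤ)+2*(ℓ:ℤ) := by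
    intro x hx y hy h
    have hne : x ≠ y := by omega
    have hm := hA x (hFA x hx) y (hFA y hy) hne
    simp only [Finset.mem_insert, Finset.mem_singleton, not_or] at hm
    omega
  by_cases hdvd : ℓ ∣ k
  · obtain ⟨m, hm⟩ := hdvd
    have hm1 : 1 ≤ m := by
      rcases Nat.eq_zero_or_pos m with h0 | h1
      · subst h0; omega
      · exact h1
    exact window_div ℓ k m hℓ1 hm1 hm F a hFsub hd2k hd2kL
  · have hcase : ℓ = 1 ∨ ℓ = 2 ∨ ℓ = 3 := by omega
    rcases hcase with rfl | rfl | rfl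
    · exact absurd (one_dvd k) hdvd
    · have hkodd : k % 2 = 1 := by omega
      have hk3 : 3 ≤ k := by omega
      refine window_l2 k hk3 hkodd F a ?_ hd1 hd2k ?_
      · intro x hx
        obtain ⟨h1, h2⟩ := hFsub x hx
        refine ⟨h1, ?_⟩
        push_cast at h2 ⊢
        omega
      · intro x hx y hy h
        refine hd2kL x hx y hy ?_
        push_cast
        omega
    · have h3 : ¬ (3:ℕ) ∣ k := hdvd
      have hk4 : 4 ≤ k := by omega
      refine window_l3 k hk4 h3 F a ?_ hd1 hd2k ?_
      · intro x hx
        obtain ⟨h1, h2⟩ := hFsub x hx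
        refine ⟨h1, ?_⟩
        push_cast at h2 ⊢
        omega
      · intro x hx y hy h
        refine hd2kL x hx y hy ?_
        push_cast
        omega

/-- For `1 ≤ ℓ ≤ 3` and `k ≥ ℓ`, `ᾱ({1, 2k, 2k+2ℓ}) = 2k/(4k+2ℓ)`. -/
theorem indRatio_one_even_even_small (ℓ k : ℕ) (hℓ1 : 1 ≤ ℓ) (hℓ3 : ℓ ≤ 3) (hk : ℓ ≤ k) :
    indRatio ({1, 2 * k, 2 * k + 2 * ℓ} : Finset ℕ) =
      (2 * (k : ℝ)) / (4 * (k : ℝ) + 2 * (ℓ : ℝ)) := by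
  classical
  have hk1 : 1 ≤ k := le_trans hℓ1 hk
  set p : ℕ := 4*k+2*ℓ with hp
  have hp0 : 0 < p := by omega
  have hp' : (0:ℝ) < (p:ℝ) := by exact_mod_cast hp0
  set v : ℝ := 2*(k:ℝ)/(p:ℝ) with hv
  have hveq : v = (2 * (k : ℝ)) / (4 * (k : ℝ) + 2 * (ℓ : ℝ)) := by
    rw [hv, hp]
    push_cast
    ring_nf
  have hk0 : (0:ℝ) ≤ (k:ℝ) := by positivity
  -- the sequence for a set A
  have hf0 : ∀ A : Set ℤ, ∀ N : ℕ,
      0 ≤ ((A ∩ Set.Icc (-(N : ℤ)) (N : ℤ)).ncard : ℝ) / (2 * (N : ℝ) + 1) := by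
    intro A N
    positivity
  -- upper bound
  have hupper : ∀ A : Set ℤ, IsIndepSet ({1, 2*k, 2*k+2*ℓ} : Finset ℕ) A →
      density A ≤ v := by
    intro A hA
    have hwin : ∀ a : ℤ, (A ∩ Set.Ico a (a + (p:ℤ))).ncard ≤ 2*k := by
      intro a
      rw [hp]
      exact_mod_cast window_bound ℓ k hℓ1 hℓ3 hk A hA a
    have hcount := count_le k p hp0 A hwin
    have hfg : ∀ N : ℕ, ((A ∩ Set.Icc (-(N : ℤ)) (N : ℤ)).ncard : ℝ) / (2 * (N : ℝ) + 1)
        ≤ ((4*(k:ℝ)/(p:ℝ))*(N:ℝ) + 2*(k:ℝ))/(2*(N:ℝ)+1) := by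
      intro N
      have hden : (0:ℝ) < 2*(N:ℝ)+1 := by positivity
      rw [div_le_div_iff_of_pos_right hden]
      calc ((A ∩ Set.Icc (-(N : ℤ)) (N : ℤ)).ncard : ℝ)
          ≤ ((2*k * ((2*N+p)/p) : ℕ) : ℝ) := by exact_mod_cast hcount N
        _ ≤ 2*(k:ℝ) * ((2*(N:ℝ)+(p:ℝ))/(p:ℝ)) := by
            push_cast
            have hq : (((2*N+p)/p : ℕ) : ℝ) ≤ (2*(N:ℝ)+(p:ℝ))/(p:ℝ) := by
              rw [le_div_iff₀ hp']
              exact_mod_cast Nat.div_mul_le_self (2*N+p) p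
            have h2k : (0:ℝ) ≤ 2*(k:ℝ) := by positivity
            calc 2*(k:ℝ) * (((2*N+p)/p : ℕ) : ℝ) ≤ 2*(k:ℝ) * ((2*(N:ℝ)+(p:ℝ))/(p:ℝ)) :=
                  mul_le_mul_of_nonneg_left hq h2k
              _ = 2*(k:ℝ) * ((2*(N:ℝ)+(p:ℝ))/(p:ℝ)) := rfl
        _ = (4*(k:ℝ)/(p:ℝ))*(N:ℝ) + 2*(k:ℝ) := by
            field_simp <;> ring
    have hlim := limsup_le_of_le_tendsto _ _ ((4*(k:ℝ)/(p:ℝ))/2) hfg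
      (tendsto_ratio (4*(k:ℝ)/(p:ℝ)) (2*(k:ℝ))) (hf0 A)
    have heq : (4*(k:ℝ)/(p:ℝ))/2 = v := by
      rw [hv]
      field_simp <;> ring
    rw [← heq]
    exact hlim
  -- lower bound for perSet
  have hPind := perSet_indep ℓ k hℓ1 hℓ3 hk
  have hlower : v ≤ density (perSet ℓ k) := by
    have hfub : IsBoundedUnder (· ≤ ·) atTop
        (fun N : ℕ => (((perSet ℓ k) ∩ Set.Icc (-(N : ℤ)) (N : ℤ)).ncard : ℝ) / (2 * (N : ℝ) + 1)) := by
      have hwin : ∀ a : ℤ, ((perSet ℓ k) ∩ Set.Ico a (a + (p:ℤ))).ncard ≤ 2*k := by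
        intro a
        rw [hp]
        exact_mod_cast window_bound ℓ k hℓ1 hℓ3 hk _ hPind a
      have hcount := count_le k p hp0 _ hwin
      apply isBoundedUnder_of_le_tendsto _
        (fun N : ℕ => ((4*(k:ℝ)/(p:ℝ))*(N:ℝ) + 2*(k:ℝ))/(2*(N:ℝ)+1)) ((4*(k:ℝ)/(p:ℝ))/2)
        ?_ (tendsto_ratio _ _)
      intro N
      have hden : (0:ℝ) < 2*(N:ℝ)+1 := by positivity
      rw [div_le_div_iff_of_pos_right hden]
      calc (((perSet ℓ k) ∩ Set.Icc (-(N : ℤ)) (N : ℤ)).ncard : ℝ)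
          ≤ ((2*k * ((2*N+p)/p) : ℕ) : ℝ) := by exact_mod_cast hcount N
        _ ≤ 2*(k:ℝ) * ((2*(N:ℝ)+(p:ℝ))/(p:ℝ)) := by
            push_cast
            have hq : (((2*N+p)/p : ℕ) : ℝ) ≤ (2*(N:ℝ)+(p:ℝ))/(p:ℝ) := by
              rw [le_div_iff₀ hp']
              exact_mod_cast Nat.div_mul_le_self (2*N+p) p
            have h2k : (0:ℝ) ≤ 2*(k:ℝ) := by positivity
            exact mul_le_mul_of_nonneg_left hq h2k
        _ = (4*(k:ℝ)/(p:ℝ))*(N:ℝ) + 2*(k:ℝ) := by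
            field_simp <;> ring
    have hfg : ∀ N : ℕ, ((4*(k:ℝ)/(p:ℝ))*(N:ℝ) + -(4*(k:ℝ)))/(2*(N:ℝ)+1)
        ≤ (((perSet ℓ k) ∩ Set.Icc (-(N : ℤ)) (N : ℤ)).ncard : ℝ) / (2 * (N : ℝ) + 1) := by
      intro N
      have hden : (0:ℝ) < 2*(N:ℝ)+1 := by positivity
      rw [div_le_div_iff_of_pos_right hden]
      have hcg := count_ge ℓ k hℓ1 hk N
      set M : ℕ := N/(4*k+2*ℓ) with hM
      have hMN : N < p*M + p := by
        rw [hp, hM]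
        have h1 := Nat.div_add_mod N (4*k+2*ℓ)
        have h2 : N % (4*k+2*ℓ) < 4*k+2*ℓ := Nat.mod_lt _ (by omega)
        omega
      have hMN' : (N:ℝ) < (p:ℝ)*(M:ℝ) + (p:ℝ) := by exact_mod_cast hMN
      have hstep1 : (4*(k:ℝ)/(p:ℝ))*(N:ℝ) + -(4*(k:ℝ)) ≤ 4*(k:ℝ)*(M:ℝ) := by
        have key : 4*(k:ℝ)*(N:ℝ) ≤ (4*(k:ℝ)*(M:ℝ) + 4*(k:ℝ))*(p:ℝ) := by nlinarith
        have h2 : (4*(k:ℝ)*(N:ℝ))/(p:ℝ) ≤ 4*(k:ℝ)*(M:ℝ) + 4*(k:ℝ) := by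
          rw [div_le_iff₀ hp']
          exact key
        have h3 : (4*(k:ℝ)/(p:ℝ))*(N:ℝ) = (4*(k:ℝ)*(N:ℝ))/(p:ℝ) := by ring
        linarith
      have hstep2 : 4*(k:ℝ)*(M:ℝ) ≤ (((perSet ℓ k) ∩ Set.Icc (-(N : ℤ)) (N : ℤ)).ncard : ℝ) := by
        have h1 : ((2*k * (2*M) : ℕ) : ℝ) ≤ (((perSet ℓ k) ∩ Set.Icc (-(N : ℤ)) (N : ℤ)).ncard : ℝ) := by
          exact_mod_cast hcg
        push_cast at h1
        linarith
      linarith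
    have hle := le_limsup_of_tendsto_le _ _ ((4*(k:ℝ)/(p:ℝ))/2)
      hfg (tendsto_ratio (4*(k:ℝ)/(p:ℝ)) (-(4*(k:ℝ)))) (hf0 _) hfub
    have heq2 : (4*(k:ℝ)/(p:ℝ))/2 = v := by
      rw [hv]
      field_simp <;> ring
    rw [← heq2]
    exact hle
  have hmem : density (perSet ℓ k) = v := le_antisymm (hupper _ hPind) hlower
  rw [← hveq]
  apply le_antisymm
  · apply Real.sSup_le
    · rintro x ⟨A, hA, rfl⟩
      exact hupper A hA
    · rw [hv]
      positivity
  · apply le_csSup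
    · refine ⟨v, ?_⟩
      rintro x ⟨A, hA, rfl⟩
      exact hupper A hA
    · exact ⟨perSet ℓ k, hPind, hmem⟩
end

section
/- Let k ≥ 2 be an integer. Then ᾱ({1, k, k+1}) = 2k/(6k+3) if k ≡ 0 (mod 3); ᾱ({1, k, k+1}) = 1/3 if k ≡ 1 (mod 3); and ᾱ({1, k, k+1}) = (k+1)/(3k+6) if k ≡ 2 (mod 3). -/
open Filter

/-- Counting lemma: a 3-separated finite set of integers inside `Icc a b`
has at most `(b-a)/3 + 1` elements. -/
lemma sep_card (F : Finset ℤ) (a b : ℤ) (hab : a ≤ b)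
    (hF : ∀ x ∈ F, a ≤ x ∧ x ≤ b)
    (hsep : ∀ x ∈ F, ∀ y ∈ F, x ≠ y → 3 ≤ |x - y|) :
    (F.card : ℤ) ≤ (b - a) / 3 + 1 := by
  have hinj : Set.InjOn (fun x => (x - a) / 3) F := by
    intro x hx y hy hxy
    by_contra hne
    have h3 := hsep x hx y hy hne
    rcases le_abs.mp h3 with h | h
    · simp only at hxy; omega
    · simp only at hxy; omega
  have hsub : F.image (fun x => (x - a) / 3) ⊆ Finset.Icc 0 ((b - a) / 3) := by
    intro u hu
    rcases Finset.mem_image.mp hu with ⟨x, hx, rfl⟩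
    rcases hF x hx with ⟨h1, h2⟩
    rw [Finset.mem_Icc]
    constructor
    · exact Int.ediv_nonneg (by omega) (by norm_num)
    · exact Int.ediv_le_ediv (by norm_num) (by omega)
  have h1 : F.card = (F.image (fun x => (x - a) / 3)).card :=
    (Finset.card_image_of_injOn hinj).symm
  have h2 : (F.image (fun x => (x - a) / 3)).card ≤ (Finset.Icc (0:ℤ) ((b - a) / 3)).card :=
    Finset.card_le_card hsub
  have h3 : ((Finset.Icc (0:ℤ) ((b - a) / 3)).card : ℤ) = (b - a) / 3 + 1 := by
    rw [Int.card_Icc]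
    have : (0:ℤ) ≤ (b - a) / 3 := Int.ediv_nonneg (by omega) (by norm_num)
    omega
  omega


/-- The chain lemma: a 3-separated finite set with the parity-pairing closure
property has at most `B` elements per `m+3` of span, `B = m/3 + 1`. -/
lemma chain_lemma (m : ℤ) (hm : 5 ≤ m) (hmodd : m % 2 = 1)
    (J : Finset ℤ) (hne : J.Nonempty)
    (hsep : ∀ x ∈ J, ∀ y ∈ J, x ≠ y → 3 ≤ |x - y|)
    (hclosE : ∀ x ∈ J, x % 2 = 0 → x - m ∈ J)
    (hclosO : ∀ x ∈ J, x % 2 = 1 → x + m ∈ J) :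
    (m + 3) * J.card ≤ (m / 3 + 1) * (J.max' hne - J.min' hne + 3) := by
  set B : ℤ := m / 3 + 1 with hB
  have hBpos : 0 < B := by omega
  have h4B : m + 3 ≤ 4 * B := by omega
  -- window bound
  have window : ∀ (a : ℤ) (F : Finset ℤ), (∀ x ∈ F, a ≤ x ∧ x ≤ a + m) → F ⊆ J →
      (F.card : ℤ) ≤ B := by
    intro a F hFa hFJ
    have := sep_card F a (a + m) (by omega) hFa
      (fun x hx y hy hxy => hsep x (hFJ hx) y (hFJ hy) hxy)
    simpa using this.trans (by omega)
  -- key induction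
  have key : ∀ n : ℕ, ∀ X : ℤ, X ∈ J → X % 2 = 0 →
      (J.filter (fun x => X < x)).card = n →
      (m + 3) * n ≤ B * (J.max' hne - X) := by
    intro n
    induction n using Nat.strong_induction_on with
    | _ n ih =>
      intro X hXJ hXe hcard
      have hXmax : X ≤ J.max' hne := Finset.le_max' J X hXJ
      rcases Nat.eq_zero_or_pos n with hn0 | hnpos
      · subst hn0
        simp only [Nat.cast_zero, mul_zero]
        exact mul_nonneg hBpos.le (by linarith)
      · have hSne : (J.filter (fun x => X < x)).Nonempty := by
          rw [← Finset.card_pos, hcard]; exact hnpos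
        set S := J.filter (fun x => X < x) with hS
        set z := S.min' hSne with hz
        have hzS : z ∈ S := S.min'_mem hSne
        have hzJ : z ∈ J := (Finset.mem_filter.mp hzS).1
        have hXz : X < z := (Finset.mem_filter.mp hzS).2
        have hz3 : X + 3 ≤ z := by
          have := hsep z hzJ X hXJ (by omega)
          rcases le_abs.mp this with h | h <;> omega
        have hzmin : ∀ x ∈ J, X < x → z ≤ x := by
          intro x hx hXx
          exact S.min'_le x (Finset.mem_filter.mpr ⟨hx, hXx⟩)
        rcases Int.emod_two_eq z with hze | hzo
        · -- z even : step of length ≥ 4, one element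
          have hz4 : X + 4 ≤ z := by omega
          set S2 := J.filter (fun x => z < x) with hS2
          have hcard2 : S2.card + 1 = n := by
            have : S = insert z S2 := by
              ext x
              simp only [hS, hS2, Finset.mem_filter, Finset.mem_insert]
              constructor
              · rintro ⟨hxJ, hXx⟩
                rcases eq_or_lt_of_le (hzmin x hxJ hXx) with h | h
                · exact Or.inl h.symm
                · exact Or.inr ⟨hxJ, h⟩
              · rintro (rfl | ⟨hxJ, hzx⟩)
                · exact ⟨hzJ, hXz⟩
                · exact ⟨hxJ, by omega⟩
            have hznot : z ∉ S2 := by simp [hS2]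
            rw [← hcard, this, Finset.card_insert_of_notMem hznot]
          have ihz := ih S2.card (by omega) z hzJ hze rfl
          have hzmax : z ≤ J.max' hne := Finset.le_max' J z hzJ
          have hn : (n : ℤ) = (S2.card : ℤ) + 1 := by exact_mod_cast hcard2.symm
          have h2 : B * 4 ≤ B * (z - X) :=
            mul_le_mul_of_nonneg_left (by omega) hBpos.le
          have hexp : B * (J.max' hne - X) = B * (J.max' hne - z) + B * (z - X) := by ring
          calc (m + 3) * (n : ℤ) = (m + 3) * (S2.card : ℤ) + (m + 3) := by rw [hn]; ring
            _ ≤ B * (J.max' hne - z) + B * 4 := add_le_add ihz (by linarith)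
            _ ≤ B * (J.max' hne - X) := by linarith
        · -- z odd : window step
          set X' := z + m with hX'
          have hX'J : X' ∈ J := hclosO z hzJ hzo
          have hX'e : X' % 2 = 0 := by omega
          set S1 := J.filter (fun x => X < x ∧ x ≤ X') with hS1
          set S2 := J.filter (fun x => X' < x) with hS2
          have hsplit : S1.card + S2.card = n := by
            have hdisj : Disjoint S1 S2 := by
              rw [Finset.disjoint_left]
              intro x hx1 hx2
              simp only [hS1, hS2, Finset.mem_filter] at hx1 hx2
              omega
            have hunion : S1 ∪ S2 = S := by
              ext x
              simp only [hS1, hS2, hS, Finset.mem_union, Finset.mem_filter]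
              constructor
              · rintro (⟨h, _, _⟩ | ⟨h, h2⟩)
                · exact ⟨h, by omega⟩
                · refine ⟨h, by omega⟩
              · rintro ⟨hxJ, hXx⟩
                by_cases hc : x ≤ X'
                · exact Or.inl ⟨hxJ, hXx, hc⟩
                · exact Or.inr ⟨hxJ, by omega⟩
            rw [← hcard, ← hunion, Finset.card_union_of_disjoint hdisj]
          have hS1card : (S1.card : ℤ) ≤ B := by
            apply window z S1 _ (Finset.filter_subset _ _)
            intro x hx
            simp only [hS1, Finset.mem_filter] at hx
            exact ⟨hzmin x hx.1 hx.2.1, by omega⟩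
          have hS2sub : S2.card < n := by
            have : z ∈ S ∧ z ∉ S2 := by
              refine ⟨hzS, ?_⟩
              simp only [hS2, Finset.mem_filter]
              rintro ⟨-, h⟩; omega
            have hsub : S2 ⊆ S := by
              intro x hx
              simp only [hS2, Finset.mem_filter] at hx
              exact Finset.mem_filter.mpr ⟨hx.1, by omega⟩
            have := Finset.card_lt_card (Finset.ssubset_iff_of_subset hsub |>.mpr ⟨z, this.1, this.2⟩)
            omega
          have ihX' := ih S2.card hS2sub X' hX'J hX'e rfl
          have hn : (n : ℤ) = (S1.card : ℤ) + (S2.card : ℤ) := by exact_mod_cast hsplit.symm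
          have h1 : (m + 3) * (S1.card : ℤ) ≤ (m + 3) * B :=
            mul_le_mul_of_nonneg_left hS1card (by omega)
          have h2 : B * (m + 3) ≤ B * (X' - X) :=
            mul_le_mul_of_nonneg_left (by omega) hBpos.le
          have hexp : B * (J.max' hne - X) = B * (J.max' hne - X') + B * (X' - X) := by ring
          calc (m + 3) * (n : ℤ) = (m + 3) * (S1.card : ℤ) + (m + 3) * (S2.card : ℤ) := by
                rw [hn]; ring
            _ ≤ (m + 3) * B + B * (J.max' hne - X') := add_le_add h1 ihX'
            _ ≤ B * (J.max' hne - X) := by linarith [mul_comm (m+3) B]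
  -- assemble
  set o := J.min' hne with ho
  have hoJ : o ∈ J := J.min'_mem hne
  have hoodd : o % 2 = 1 := by
    rcases Int.emod_two_eq o with h | h
    · exfalso
      have := J.min'_le (o - m) (hclosE o hoJ h)
      omega
    · exact h
  set X0 := o + m with hX0
  have hX0J : X0 ∈ J := hclosO o hoJ hoodd
  have hX0e : X0 % 2 = 0 := by omega
  set S0 := J.filter (fun x => X0 < x) with hS0
  have hkey := key S0.card X0 hX0J hX0e rfl
  have hlow : (J.filter (fun x => ¬ X0 < x)).card + S0.card = J.card := by
    have h := Finset.card_filter_add_card_filter_not (s := J) (p := fun x => X0 < x)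
    rw [hS0]
    omega
  have hlowcard : ((J.filter (fun x => ¬ X0 < x)).card : ℤ) ≤ m / 3 + 1 := by
    apply window o _ _ (Finset.filter_subset _ _)
    intro x hx
    simp only [Finset.mem_filter] at hx
    exact ⟨J.min'_le x hx.1, by omega⟩
  have hmax : X0 ≤ J.max' hne := Finset.le_max' J X0 hX0J
  have hcast : (J.card : ℤ) = ((J.filter (fun x => ¬ X0 < x)).card : ℤ) + (S0.card : ℤ) := by
    exact_mod_cast hlow.symm
  have h1 : (m + 3) * ((J.filter (fun x => ¬ X0 < x)).card : ℤ) ≤ (m + 3) * B :=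
    mul_le_mul_of_nonneg_left (by exact_mod_cast hlowcard) (by omega)
  calc (m + 3) * (J.card : ℤ)
      = (m + 3) * ((J.filter (fun x => ¬ X0 < x)).card : ℤ) + (m + 3) * (S0.card : ℤ) := by
        rw [hcast]; ring
    _ ≤ (m + 3) * B + B * (J.max' hne - X0) := add_le_add h1 hkey
    _ = B * (J.max' hne - o + 3) := by rw [hX0]; ring


/-- Chain bound applied to an independent finset. -/
lemma indep_finset_bound (k : ℕ) (hk : 2 ≤ k) (F : Finset ℤ) (hFne : F.Nonempty)
    (hind : ∀ a ∈ F, ∀ b ∈ F, a ≠ b → (a - b).natAbs ∉ ({1, k, k+1} : Finset ℕ)) :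
    (2*(k:ℤ)+4) * (2 * F.card) ≤
      ((2*(k:ℤ)+1) / 3 + 1) * (2*(F.max' hFne) - 2*(F.min' hFne) + (2*(k:ℤ)+1) + 3) := by
  set m : ℤ := 2*(k:ℤ)+1 with hm
  have hm5 : 5 ≤ m := by omega
  have hmodd : m % 2 = 1 := by omega
  -- difference facts
  have hdiff : ∀ a ∈ F, ∀ b ∈ F, a ≠ b →
      a - b ≠ 1 ∧ a - b ≠ -1 ∧ a - b ≠ (k:ℤ) ∧ a - b ≠ -(k:ℤ) ∧
      a - b ≠ (k:ℤ)+1 ∧ a - b ≠ -((k:ℤ)+1) := by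
    intro a ha b hb hab
    have h := hind a ha b hb hab
    simp only [Finset.mem_insert, Finset.mem_singleton, not_or] at h
    obtain ⟨h1, h2, h3⟩ := h
    omega
  set J : Finset ℤ := F.image (fun a => 2*a) ∪ F.image (fun a => 2*a - m) with hJ
  have hmemJ : ∀ x, x ∈ J ↔ (∃ a ∈ F, 2*a = x) ∨ (∃ a ∈ F, 2*a - m = x) := by
    intro x
    simp [hJ, Finset.mem_union, Finset.mem_image]
  have hJne : J.Nonempty := by
    obtain ⟨a, ha⟩ := hFne
    exact ⟨2*a, (hmemJ _).mpr (Or.inl ⟨a, ha, rfl⟩)⟩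
  have hsep : ∀ x ∈ J, ∀ y ∈ J, x ≠ y → 3 ≤ |x - y| := by
    intro x hx y hy hxy
    rw [le_abs]
    rcases (hmemJ x).mp hx with ⟨a, ha, rfl⟩ | ⟨a, ha, rfl⟩ <;>
      rcases (hmemJ y).mp hy with ⟨b, hb, rfl⟩ | ⟨b, hb, rfl⟩
    · have hab : a ≠ b := by omega
      have := hdiff a ha b hb hab
      omega
    · by_cases hab : a = b
      · subst hab; omega
      · have := hdiff a ha b hb hab
        omega
    · by_cases hab : a = b
      · subst hab; omega
      · have := hdiff a ha b hb hab
        omega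
    · have hab : a ≠ b := by omega
      have := hdiff a ha b hb hab
      omega
  have hclosE : ∀ x ∈ J, x % 2 = 0 → x - m ∈ J := by
    intro x hx hxe
    rcases (hmemJ x).mp hx with ⟨a, ha, rfl⟩ | ⟨a, ha, rfl⟩
    · exact (hmemJ _).mpr (Or.inr ⟨a, ha, rfl⟩)
    · omega
  have hclosO : ∀ x ∈ J, x % 2 = 1 → x + m ∈ J := by
    intro x hx hxo
    rcases (hmemJ x).mp hx with ⟨a, ha, rfl⟩ | ⟨a, ha, rfl⟩
    · omega
    · refine (hmemJ _).mpr (Or.inl ⟨a, ha, by ring⟩)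
  have hchain := chain_lemma m hm5 hmodd J hJne hsep hclosE hclosO
  -- card J = 2 * card F
  have hdisj : Disjoint (F.image (fun a => 2*a)) (F.image (fun a => 2*a - m)) := by
    rw [Finset.disjoint_left]
    intro x hx hx'
    rcases Finset.mem_image.mp hx with ⟨a, _, rfl⟩
    rcases Finset.mem_image.mp hx' with ⟨b, _, hb⟩
    omega
  have hcard : J.card = 2 * F.card := by
    rw [hJ, Finset.card_union_of_disjoint hdisj,
      Finset.card_image_of_injective _ (fun a b h => by omega),
      Finset.card_image_of_injective _ (fun a b h => by omega)]
    omega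
  -- max/min bounds
  have hmaxle : J.max' hJne ≤ 2 * F.max' hFne := by
    apply Finset.max'_le
    intro x hx
    rcases (hmemJ x).mp hx with ⟨a, ha, rfl⟩ | ⟨a, ha, rfl⟩
    · have := F.le_max' a ha; omega
    · have := F.le_max' a ha; omega
  have hminle : 2 * F.min' hFne - m ≤ J.min' hJne := by
    apply Finset.le_min'
    intro x hx
    rcases (hmemJ x).mp hx with ⟨a, ha, rfl⟩ | ⟨a, ha, rfl⟩
    · have := F.min'_le a ha; omega
    · have := F.min'_le a ha; omega
  have hBpos : (0:ℤ) < m / 3 + 1 := by positivity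
  have hmono : (m / 3 + 1) * (J.max' hJne - J.min' hJne + 3) ≤
      (m / 3 + 1) * (2*(F.max' hFne) - 2*(F.min' hFne) + m + 3) :=
    mul_le_mul_of_nonneg_left (by omega) hBpos.le
  rw [hcard] at hchain
  push_cast at hchain
  have hgoal : (2*(k:ℤ)+4) * (2 * (F.card:ℤ)) = (m+3) * (2*(F.card:ℤ)) := by rw [hm]; ring
  linarith


/-- Window lemma for `k ≡ 0 (mod 3)`: any window of `2k+1` consecutive integers
contains at most `2k/3` elements of an independent set. -/
lemma window_k0 (j : ℕ) (hj : 1 ≤ j) (t : ℤ) (F : Finset ℤ)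
    (hsub : ∀ x ∈ F, t ≤ x ∧ x ≤ t + 6*j)
    (hdiff : ∀ a ∈ F, ∀ b ∈ F, a ≠ b →
      a - b ≠ 1 ∧ a - b ≠ -1 ∧ a - b ≠ 3*(j:ℤ) ∧ a - b ≠ -(3*(j:ℤ)) ∧
      a - b ≠ 3*(j:ℤ)+1 ∧ a - b ≠ -(3*(j:ℤ)+1)) :
    (F.card : ℤ) ≤ 2*j := by
  set k : ℤ := 3*(j:ℤ) with hkj
  have hk3 : 3 ≤ k := by omega
  by_cases hboth : t ∈ F ∧ t + 2*k ∈ F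
  · -- ladder case
    obtain ⟨ht, ht2⟩ := hboth
    set F' := (F.erase t).erase (t + 2*k) with hF'
    have hcardF : F.card = F'.card + 2 := by
      rw [hF']
      rw [Finset.card_erase_of_mem (Finset.mem_erase.mpr ⟨by omega, ht2⟩),
        Finset.card_erase_of_mem ht]
      have h1 : 1 ≤ F.card := Finset.card_pos.mpr ⟨t, ht⟩
      have h2 : 1 < F.card := Finset.one_lt_card.mpr ⟨t, ht, t + 2*k, ht2, by omega⟩
      omega
    have hmem' : ∀ x ∈ F', x ∈ F ∧ x ≠ t ∧ x ≠ t + 2*k := by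
      intro x hx
      simp only [hF', Finset.mem_erase] at hx
      exact ⟨hx.2.2, hx.2.1, hx.1⟩
    have hrange : ∀ x ∈ F', (t + 2 ≤ x ∧ x ≤ t + k - 2) ∨ (t + k + 2 ≤ x ∧ x ≤ t + 2*k - 2) := by
      intro x hx
      obtain ⟨hxF, hxt, hxt2⟩ := hmem' x hx
      have h1 := hdiff x hxF t ht hxt
      have h2 := hdiff x hxF (t + 2*k) ht2 (by omega)
      have h3 := hsub x hxF
      omega
    set ψ : ℤ → ℤ := fun x => if x ≤ t + k - 2 then 2*(x - t - 2) + 1 else 2*(x - t - k - 2) with hψ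
    set G := F'.image ψ with hG
    have hψsep : ∀ x ∈ F', ∀ y ∈ F', x ≠ y → 3 ≤ |ψ x - ψ y| := by
      intro x hx y hy hxy
      have hdx := hrange x hx
      have hdy := hrange y hy
      have hd := hdiff x (hmem' x hx).1 y (hmem' y hy).1 hxy
      rw [le_abs]
      simp only [hψ]
      by_cases hx1 : x ≤ t + k - 2 <;> by_cases hy1 : y ≤ t + k - 2 <;>
        simp only [hx1, hy1, if_true, if_false, ite_true, ite_false] <;> omega
    have hGcard : G.card = F'.card := by
      apply Finset.card_image_of_injOn
      intro x hx y hy hxy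
      by_contra hne
      have := hψsep x hx y hy hne
      rw [hxy] at this
      simp at this
    by_cases hF'e : F' = ∅
    · rw [hF'e] at hcardF
      simp at hcardF
      omega
    · have hj2 : 2 ≤ j := by
        -- if j = 1 then F' must be empty
        by_contra hj1
        have hj1' : j = 1 := by omega
        obtain ⟨x, hx⟩ := Finset.nonempty_iff_ne_empty.mpr hF'e
        have := hrange x hx
        omega
      have hGsub : ∀ u ∈ G, 0 ≤ u ∧ u ≤ 2*k - 7 := by
        intro u hu
        obtain ⟨x, hx, rfl⟩ := Finset.mem_image.mp hu
        have := hrange x hx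
        simp only [hψ]
        by_cases hx1 : x ≤ t + k - 2 <;> simp only [hx1, if_true, if_false, ite_true, ite_false] <;> omega
      have hGsep : ∀ u ∈ G, ∀ v ∈ G, u ≠ v → 3 ≤ |u - v| := by
        intro u hu v hv huv
        obtain ⟨x, hx, rfl⟩ := Finset.mem_image.mp hu
        obtain ⟨y, hy, rfl⟩ := Finset.mem_image.mp hv
        exact hψsep x hx y hy (by rintro rfl; exact huv rfl)
      have := sep_card G 0 (2*k-7) (by omega) (fun u hu => ⟨(hGsub u hu).1, (hGsub u hu).2⟩) hGsep
      have hdiv : (2*k - 7 - 0) / 3 + 1 = 2*(j:ℤ) - 2 := by omega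
      omega
  · -- circulant case
    set m : ℤ := 2*k + 1 with hm
    set φ : ℤ → ℤ := fun x => (2*(x - t)) % m with hφ
    have hmpos : (0:ℤ) < m := by omega
    have hφmem : ∀ x ∈ F, 0 ≤ φ x ∧ φ x < m := fun x _ =>
      ⟨Int.emod_nonneg _ (by omega), Int.emod_lt_of_pos _ hmpos⟩
    have hcyc : ∀ x ∈ F, ∀ y ∈ F, x ≠ y → (3 ≤ |φ x - φ y| ∧ |φ x - φ y| ≤ m - 3) := by
      intro x hx y hy hxy
      have hd := hdiff x hx y hy hxy
      have hbx := hsub x hx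
      have hby := hsub y hy
      have hnotend : ¬ (x - y = 2*k) ∧ ¬ (y - x = 2*k) := by
        constructor
        · intro h
          have e1 : y = t := by omega
          have e2 : x = t + 2*k := by omega
          subst e1; subst e2
          exact hboth ⟨hy, hx⟩
        · intro h
          have e1 : x = t := by omega
          have e2 : y = t + 2*k := by omega
          subst e1; subst e2
          exact hboth ⟨hx, hy⟩
      have hdvd1 : m ∣ (2*(x - t) - φ x) := Int.dvd_self_sub_of_emod_eq (by simp only [hφ])
      have hdvd2 : m ∣ (2*(y - t) - φ y) := Int.dvd_self_sub_of_emod_eq (by simp only [hφ])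
      have hdvd : m ∣ ((φ x - φ y) - 2*(x - y)) := by
        have := dvd_sub hdvd2 hdvd1
        have heq : (2*(y-t) - φ y) - (2*(x-t) - φ x) = (φ x - φ y) - 2*(x - y) := by ring
        rwa [heq] at this
      obtain ⟨q, hq⟩ := hdvd
      have hφx := hφmem x hx
      have hφy := hφmem y hy
      have hqb : -3 ≤ q ∧ q ≤ 3 := by
        constructor <;> nlinarith [hq, hφx.1, hφx.2, hφy.1, hφy.2]
      rw [le_abs, abs_le]
      have hq3 : q = -3 ∨ q = -2 ∨ q = -1 ∨ q = 0 ∨ q = 1 ∨ q = 2 ∨ q = 3 := by omega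
      rcases hq3 with rfl | rfl | rfl | rfl | rfl | rfl | rfl <;> omega
    set G := F.image φ with hG
    have hGcard : G.card = F.card := by
      apply Finset.card_image_of_injOn
      intro x hx y hy hxy
      by_contra hne
      have := (hcyc x hx y hy hne).1
      rw [hxy] at this
      simp at this
    rcases Finset.eq_empty_or_nonempty G with hGe | hGne
    · rw [hGe] at hGcard; simp at hGcard; omega
    · by_cases hG1 : G.card ≤ 1
      · omega
      · have hGsep : ∀ u ∈ G, ∀ v ∈ G, u ≠ v → 3 ≤ |u - v| := by
          intro u hu v hv huv
          obtain ⟨x, hx, rfl⟩ := Finset.mem_image.mp hu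
          obtain ⟨y, hy, rfl⟩ := Finset.mem_image.mp hv
          exact (hcyc x hx y hy (by rintro rfl; exact huv rfl)).1
        set u0 := G.min' hGne with hu0
        set u1 := G.max' hGne with hu1
        have hu0G := G.min'_mem hGne
        have hu1G := G.max'_mem hGne
        have hne01 : u0 ≠ u1 := by
          intro h
          have : G.card ≤ 1 := by
            apply Finset.card_le_one.mpr
            intro a ha b hb
            have h1 := G.min'_le a ha
            have h2 := G.le_max' a ha
            have h3 := G.min'_le b hb
            have h4 := G.le_max' b hb
            omega
          omega
        have hspan : u1 - u0 ≤ m - 3 := by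
          obtain ⟨x, hx, hxe⟩ := Finset.mem_image.mp hu0G
          obtain ⟨y, hy, hye⟩ := Finset.mem_image.mp hu1G
          have hxy : x ≠ y := by rintro rfl; rw [hxe] at hye; exact hne01 hye
          have := (hcyc x hx y hy hxy).2
          rw [hxe, hye] at this
          rw [abs_le] at this
          omega
        have := sep_card G u0 u1 (by have := G.min'_le u1 hu1G; omega)
          (fun x hx => ⟨G.min'_le x hx, G.le_max' x hx⟩) hGsep
        have hdiv : (u1 - u0) / 3 + 1 ≤ 2*(j:ℤ) := by
          have h1 : (u1 - u0) / 3 ≤ (m - 3) / 3 := Int.ediv_le_ediv (by norm_num) hspan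
          have h2 : (m - 3)/3 = 2*(j:ℤ) - 1 := by omega
          omega
        omega


lemma count_k0 (j : ℕ) (hj : 1 ≤ j) (A : Set ℤ)
    (hdiff : ∀ a ∈ A, ∀ b ∈ A, a ≠ b →
      a - b ≠ 1 ∧ a - b ≠ -1 ∧ a - b ≠ 3*(j:ℤ) ∧ a - b ≠ -(3*(j:ℤ)) ∧
      a - b ≠ 3*(j:ℤ)+1 ∧ a - b ≠ -(3*(j:ℤ)+1)) (N : ℕ) :
    ((A ∩ Set.Icc (-(N:ℤ)) (N:ℤ)).ncard : ℤ) ≤ 2*(j:ℤ) * ((2*N) / (6*j+1) + 1 : ℕ) := by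
  have hfin : (A ∩ Set.Icc (-(N:ℤ)) (N:ℤ)).Finite :=
    Set.Finite.inter_of_right (Set.finite_Icc _ _) A
  set F := hfin.toFinset with hF
  have hmemF : ∀ x, x ∈ F ↔ x ∈ A ∧ -(N:ℤ) ≤ x ∧ x ≤ N := by
    intro x
    rw [hF, Set.Finite.mem_toFinset]
    simp [Set.mem_Icc]
  have hncard : (A ∩ Set.Icc (-(N:ℤ)) (N:ℤ)).ncard = F.card :=
    Set.ncard_eq_toFinset_card _ hfin
  set mN : ℕ := 6*j+1 with hmN
  set Q : ℕ := (2*N) / mN + 1 with hQ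
  -- cover
  have hcover : F ⊆ (Finset.range Q).biUnion
      (fun i => F.filter (fun x => -(N:ℤ) + i*mN ≤ x ∧ x ≤ -(N:ℤ) + i*mN + 6*j)) := by
    intro x hx
    obtain ⟨hxA, hxl, hxr⟩ := (hmemF x).mp hx
    set n : ℕ := (x + N).toNat with hn
    have hnx : (n : ℤ) = x + N := Int.toNat_of_nonneg (by omega)
    set i : ℕ := n / mN with hi
    have hdm : mN * i + n % mN = n := Nat.div_add_mod n mN
    have hmod : n % mN < mN := Nat.mod_lt n (by omega)
    have hn2N : n ≤ 2*N := by omega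
    have hiQ : i < Q := by
      rw [hQ]
      exact Nat.lt_succ_of_le (hi ▸ Nat.div_le_div_right hn2N)
    have h1n : mN * i ≤ n := Nat.le.intro hdm
    have h2n : n < mN * i + mN := by
      calc n = mN * i + n % mN := hdm.symm
        _ < mN * i + mN := Nat.add_lt_add_left hmod _
    have h1 : (mN:ℤ) * (i:ℤ) ≤ (n:ℤ) := by exact_mod_cast h1n
    have h2 : (n:ℤ) < (mN:ℤ) * (i:ℤ) + (mN:ℤ) := by exact_mod_cast h2n
    have hmNc : (mN : ℤ) = 6*(j:ℤ)+1 := by rw [hmN]; push_cast; ring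
    rw [Finset.mem_biUnion]
    refine ⟨i, Finset.mem_range.mpr hiQ, Finset.mem_filter.mpr ⟨hx, ?_, ?_⟩⟩
    · nlinarith [h1, hnx]
    · nlinarith [h2, hnx, hmNc]
  have hcard : F.card ≤ Q * (2*j) := by
    calc F.card ≤ _ := Finset.card_le_card hcover
      _ ≤ ∑ i ∈ Finset.range Q, (F.filter (fun x => -(N:ℤ) + i*mN ≤ x ∧ x ≤ -(N:ℤ) + i*mN + 6*j)).card :=
          Finset.card_biUnion_le
      _ ≤ ∑ _i ∈ Finset.range Q, 2*j := by
          apply Finset.sum_le_sum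
          intro i _
          have hw := window_k0 j hj (-(N:ℤ) + i*mN)
            (F.filter (fun x => -(N:ℤ) + i*mN ≤ x ∧ x ≤ -(N:ℤ) + i*mN + 6*j))
            (fun x hx => (Finset.mem_filter.mp hx).2)
            (fun a ha b hb hab => hdiff a ((hmemF a).mp (Finset.mem_filter.mp ha).1).1
              b ((hmemF b).mp (Finset.mem_filter.mp hb).1).1 hab)
          exact_mod_cast hw
      _ = Q * (2*j) := by rw [Finset.sum_const, Finset.card_range]; ring
  rw [hncard]
  have : (F.card : ℤ) ≤ (Q : ℤ) * (2*j) := by exact_mod_cast hcard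
  linarith


lemma block_card (p : ℕ) (hp : 0 < p) (B : Finset ℤ) (hB : ∀ b ∈ B, 0 ≤ b ∧ b < p) (a : ℤ) :
    ((Finset.Ico a (a + p)).filter (fun x => x % (p:ℤ) ∈ B)).card = B.card := by
  apply Finset.card_bij (fun x _ => x % (p:ℤ))
  · intro x hx
    exact (Finset.mem_filter.mp hx).2
  · intro x hx y hy hxy
    have hx' := Finset.mem_Ico.mp (Finset.mem_filter.mp hx).1
    have hy' := Finset.mem_Ico.mp (Finset.mem_filter.mp hy).1
    have hdvd : (p:ℤ) ∣ (x - y) := by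
      rw [Int.dvd_iff_emod_eq_zero, Int.sub_emod, hxy]
      simp
    obtain ⟨q, hq⟩ := hdvd
    have hppos : (0:ℤ) < p := by exact_mod_cast hp
    have h1 : q < 1 := by nlinarith
    have h2 : -1 < q := by nlinarith
    have : q = 0 := by omega
    rw [this] at hq
    omega
  · intro b hb
    obtain ⟨hb0, hbp⟩ := hB b hb
    have hppos : (0:ℤ) < p := by exact_mod_cast hp
    refine ⟨a + (b - a) % p, ?_, ?_⟩
    · have h1 : 0 ≤ (b - a) % p := Int.emod_nonneg _ (by omega)
      have h2 : (b - a) % p < p := Int.emod_lt_of_pos _ hppos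
      have hxp : (a + (b - a) % p) % p = b := by
        calc (a + (b - a) % p) % p = (a % p + (b - a) % p % p) % p := Int.add_emod _ _ _
          _ = (a % p + (b - a) % p) % p := by rw [Int.emod_emod_of_dvd _ dvd_rfl]
          _ = (a + (b - a)) % p := (Int.add_emod _ _ _).symm
          _ = b % p := by ring_nf
          _ = b := Int.emod_eq_of_lt hb0 hbp
      refine Finset.mem_filter.mpr ⟨Finset.mem_Ico.mpr ⟨by omega, by omega⟩, ?_⟩
      rw [hxp]; exact hb
    · calc (a + (b - a) % p) % p = (a % p + (b - a) % p % p) % p := Int.add_emod _ _ _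
        _ = (a % p + (b - a) % p) % p := by rw [Int.emod_emod_of_dvd _ dvd_rfl]
        _ = (a + (b - a)) % p := (Int.add_emod _ _ _).symm
        _ = b % p := by ring_nf
        _ = b := Int.emod_eq_of_lt hb0 hbp

lemma strip_card (p : ℕ) (hp : 0 < p) (B : Finset ℤ) (hB : ∀ b ∈ B, 0 ≤ b ∧ b < p)
    (a : ℤ) (s : ℕ) :
    ((Finset.Ico a (a + (s:ℤ)*(p:ℤ))).filter (fun x => x % (p:ℤ) ∈ B)).card = s * B.card := by
  induction s with
  | zero => simp
  | succ s ih =>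
    have hsplit : Finset.Ico a (a + ((s:ℤ)+1)*(p:ℤ)) =
        Finset.Ico a (a + (s:ℤ)*(p:ℤ)) ∪ Finset.Ico (a + (s:ℤ)*(p:ℤ)) (a + (s:ℤ)*(p:ℤ) + p) := by
      rw [Finset.Ico_union_Ico_eq_Ico]
      · congr 1; ring
      · have : (0:ℤ) ≤ (s:ℤ)*(p:ℤ) := by positivity
        omega
      · have : (0:ℤ) < (p:ℤ) := by exact_mod_cast hp
        omega
    have hdisj : Disjoint (Finset.Ico a (a + (s:ℤ)*(p:ℤ)))
        (Finset.Ico (a + (s:ℤ)*(p:ℤ)) (a + (s:ℤ)*(p:ℤ) + p)) := by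
      apply Finset.Ico_disjoint_Ico_consecutive
    have hcast : ((s:ℕ)+1 : ℤ) = ((s:ℤ)+1) := by push_cast; ring
    rw [show ((((s+1):ℕ)):ℤ) = ((s:ℤ)+1) by push_cast; ring] at *
    rw [hsplit, Finset.filter_union,
      Finset.card_union_of_disjoint (Finset.disjoint_filter_filter hdisj), ih,
      block_card p hp B hB]
    ring

lemma periodic_count (p : ℕ) (hp : 0 < p) (B : Finset ℤ) (hB : ∀ b ∈ B, 0 ≤ b ∧ b < p) (N : ℕ) :
    ((2*N+1)/p) * B.card ≤ ({x : ℤ | x % (p:ℤ) ∈ B} ∩ Set.Icc (-(N:ℤ)) (N:ℤ)).ncard ∧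
    ({x : ℤ | x % (p:ℤ) ∈ B} ∩ Set.Icc (-(N:ℤ)) (N:ℤ)).ncard ≤ ((2*N+1)/p + 1) * B.card := by
  set T : ℕ := (2*N+1)/p with hT
  set G := (Finset.Ico (-(N:ℤ)) ((N:ℤ)+1)).filter (fun x => x % (p:ℤ) ∈ B) with hG
  have hset : ({x : ℤ | x % (p:ℤ) ∈ B} ∩ Set.Icc (-(N:ℤ)) (N:ℤ)) = ↑G := by
    ext x
    simp only [hG, Set.mem_inter_iff, Set.mem_setOf_eq, Set.mem_Icc, Finset.coe_filter,
      Finset.mem_Ico, Set.mem_setOf_eq]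
    constructor
    · rintro ⟨h1, h2, h3⟩; exact ⟨⟨h2, by omega⟩, h1⟩
    · rintro ⟨⟨h2, h3⟩, h1⟩; exact ⟨h1, h2, by omega⟩
  have hncard : ({x : ℤ | x % (p:ℤ) ∈ B} ∩ Set.Icc (-(N:ℤ)) (N:ℤ)).ncard = G.card := by
    rw [hset, Set.ncard_coe_finset]
  have hTp : (T:ℤ)*(p:ℤ) ≤ 2*(N:ℤ)+1 := by
    have : T * p ≤ 2*N+1 := Nat.div_mul_le_self _ _
    exact_mod_cast this
  have hTp2 : 2*(N:ℤ)+1 < ((T:ℤ)+1)*(p:ℤ) := by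
    have hbase : 2*N+1 < (2*N+1)/p*p + p := Nat.lt_div_mul_add hp
    have h' : 2*N+1 < (T+1)*p := by
      calc 2*N+1 < (2*N+1)/p*p + p := hbase
        _ = (T+1)*p := by rw [hT, Nat.add_mul, one_mul]
    exact_mod_cast h'
  constructor
  · rw [hncard]
    have hsub : (Finset.Ico (-(N:ℤ)) (-(N:ℤ) + (T:ℤ)*(p:ℤ))).filter (fun x => x % (p:ℤ) ∈ B) ⊆ G := by
      apply Finset.filter_subset_filter
      apply Finset.Ico_subset_Ico le_rfl
      omega
    have := Finset.card_le_card hsub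
    rw [strip_card p hp B hB] at this
    exact this
  · rw [hncard]
    have hsub : G ⊆ (Finset.Ico (-(N:ℤ)) (-(N:ℤ) + ((T+1:ℕ):ℤ)*(p:ℤ))).filter (fun x => x % (p:ℤ) ∈ B) := by
      apply Finset.filter_subset_filter
      apply Finset.Ico_subset_Ico le_rfl
      push_cast
      omega
    have := Finset.card_le_card hsub
    rw [strip_card p hp B hB] at this
    exact this

lemma tendsto_inv_lin (c : ℝ) : Filter.Tendsto (fun N : ℕ => c / (2*(N:ℝ)+1)) atTop (nhds 0) := by
  apply Filter.Tendsto.div_atTop (tendsto_const_nhds)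
  apply Filter.tendsto_atTop_add_const_right
  exact (tendsto_natCast_atTop_atTop (R := ℝ)).const_mul_atTop (by norm_num)

lemma periodic_density (p : ℕ) (hp : 0 < p) (B : Finset ℤ) (hB : ∀ b ∈ B, 0 ≤ b ∧ b < p) :
    density {x : ℤ | x % (p:ℤ) ∈ B} = (B.card : ℝ) / p := by
  apply Filter.Tendsto.limsup_eq
  rw [← tendsto_sub_nhds_zero_iff]
  apply squeeze_zero_norm _ (tendsto_inv_lin ((B.card : ℝ)))
  intro N
  obtain ⟨hlo, hhi⟩ := periodic_count p hp B hB N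
  set cnt := ({x : ℤ | x % (p:ℤ) ∈ B} ∩ Set.Icc (-(N:ℤ)) (N:ℤ)).ncard with hcnt
  set T : ℕ := (2*N+1)/p with hT
  have hTp : (T:ℝ)*(p:ℝ) ≤ 2*(N:ℝ)+1 := by exact_mod_cast Nat.div_mul_le_self (2*N+1) p
  have hTp2 : 2*(N:ℝ)+1 < ((T:ℝ)+1)*(p:ℝ) := by
    have hbase : 2*N+1 < (2*N+1)/p*p + p := Nat.lt_div_mul_add hp
    have h' : 2*N+1 < (T+1)*p := by
      calc 2*N+1 < (2*N+1)/p*p + p := hbase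
        _ = (T+1)*p := by rw [hT, Nat.add_mul, one_mul]
    exact_mod_cast h'
  have hppos : (0:ℝ) < p := by exact_mod_cast hp
  have hdpos : (0:ℝ) < 2*(N:ℝ)+1 := by positivity
  have hlo' : (T:ℝ)*(B.card:ℝ) ≤ (cnt:ℝ) := by exact_mod_cast hlo
  have hhi' : (cnt:ℝ) ≤ ((T:ℝ)+1)*(B.card:ℝ) := by exact_mod_cast hhi
  have hkey : |(p:ℝ)*(cnt:ℝ) - (2*(N:ℝ)+1)*(B.card:ℝ)| ≤ (p:ℝ)*(B.card:ℝ) := by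
    rw [abs_le]
    have hc0 : (0:ℝ) ≤ (B.card:ℝ) := by positivity
    constructor <;> nlinarith
  rw [Real.norm_eq_abs]
  have heq : (cnt:ℝ)/(2*(N:ℝ)+1) - (B.card:ℝ)/(p:ℝ) =
      ((p:ℝ)*(cnt:ℝ) - (2*(N:ℝ)+1)*(B.card:ℝ)) / ((p:ℝ)*(2*(N:ℝ)+1)) := by
    field_simp
  rw [heq, abs_div, abs_of_pos (mul_pos hppos hdpos),
    div_le_div_iff₀ (mul_pos hppos hdpos) hdpos]
  calc |(p:ℝ)*(cnt:ℝ) - (2*(N:ℝ)+1)*(B.card:ℝ)| * (2*(N:ℝ)+1)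
      ≤ ((p:ℝ)*(B.card:ℝ)) * (2*(N:ℝ)+1) :=
        mul_le_mul_of_nonneg_right hkey hdpos.le
    _ = (B.card:ℝ) * ((p:ℝ)*(2*(N:ℝ)+1)) := by ring


lemma density_le (A : Set ℤ) (c d : ℝ)
    (h : ∀ N : ℕ, ((A ∩ Set.Icc (-(N:ℤ)) (N:ℤ)).ncard : ℝ) ≤ c * (2*(N:ℝ)+1) + d) :
    density A ≤ c := by
  set f : ℕ → ℝ := fun N => ((A ∩ Set.Icc (-(N:ℤ)) (N:ℤ)).ncard : ℝ) / (2 * (N:ℝ) + 1) with hf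
  set g : ℕ → ℝ := fun N => c + d / (2*(N:ℝ)+1) with hg
  have hfg : ∀ N, f N ≤ g N := by
    intro N
    have hdpos : (0:ℝ) < 2*(N:ℝ)+1 := by positivity
    rw [hf, hg]
    simp only
    rw [div_le_iff₀ hdpos] at *
    calc ((A ∩ Set.Icc (-(N:ℤ)) (N:ℤ)).ncard : ℝ) ≤ c * (2*(N:ℝ)+1) + d := h N
      _ = (c + d / (2*(N:ℝ)+1)) * (2*(N:ℝ)+1) := by field_simp
  have hgt : Filter.Tendsto g atTop (nhds c) := by
    have := (tendsto_inv_lin d).const_add c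
    simpa using this
  have hgb : Filter.IsBoundedUnder (· ≤ ·) atTop g := hgt.isBoundedUnder_le
  have hfb : Filter.IsCoboundedUnder (· ≤ ·) atTop f := by
    apply Filter.isCoboundedUnder_le_of_eventually_le atTop (x := 0)
    apply Filter.Eventually.of_forall
    intro N
    positivity
  calc density A = Filter.limsup f atTop := rfl
    _ ≤ Filter.limsup g atTop := Filter.limsup_le_limsup (Filter.Eventually.of_forall hfg) hfb hgb
    _ = c := hgt.limsup_eq


-- case k ≡ 1 (mod 3)
lemma indep1 (k : ℕ) (hk : 2 ≤ k) (hk3 : k % 3 = 1) :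
    IsIndepSet ({1, k, k + 1} : Finset ℕ) {x : ℤ | x % (3:ℤ) ∈ ({0} : Finset ℤ)} := by
  intro a ha b hb hab hS
  simp only [Set.mem_setOf_eq, Finset.mem_singleton] at ha hb
  simp only [Finset.mem_insert, Finset.mem_singleton] at hS
  omega

-- case k ≡ 2 (mod 3)
lemma indep2 (k : ℕ) (hk : 2 ≤ k) (hk3 : k % 3 = 2) :
    IsIndepSet ({1, k, k + 1} : Finset ℕ)
      {x : ℤ | x % ((k:ℤ)+2) ∈ (Finset.range ((k+1)/3)).image (fun i : ℕ => (3*i : ℤ))} := by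
  intro a ha b hb hab hS
  simp only [Set.mem_setOf_eq, Finset.mem_image, Finset.mem_range] at ha hb
  obtain ⟨i, hi, hia⟩ := ha
  obtain ⟨i', hi', hib⟩ := hb
  simp only [Finset.mem_insert, Finset.mem_singleton] at hS
  set p : ℤ := (k:ℤ) + 2 with hp
  have hppos : (0:ℤ) < p := by omega
  have hma := Int.emod_add_mul_ediv a p
  have hmb := Int.emod_add_mul_ediv b p
  obtain ⟨q, hab'⟩ : ∃ q : ℤ, a - b = (a % p - b % p) + p * q :=
    ⟨a/p - b/p, by rw [mul_sub]; linarith [hma, hmb]⟩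
  have habs : -((k:ℤ)+1) ≤ a - b ∧ a - b ≤ (k:ℤ)+1 := by omega
  have hcc : 3*((k:ℕ)+1)/3 = (k:ℕ)+1 := by omega
  have hibd : (3*i : ℤ) ≤ (k:ℤ) - 2 := by
    have : 3*i ≤ k - 2 := by omega
    exact_mod_cast this
  have hibd' : (3*i' : ℤ) ≤ (k:ℤ) - 2 := by
    have : 3*i' ≤ k - 2 := by omega
    exact_mod_cast this
  have hres : a % p = (3*i : ℤ) ∧ b % p = (3*i' : ℤ) := ⟨hia.symm, hib.symm⟩
  have hpq : p * q = (a - b) - (a % p - b % p) := by linarith [hab']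
  have h2l : p * (-2) < p * q := by
    have : (0:ℤ) ≤ (3*i:ℤ) := by positivity
    have : (0:ℤ) ≤ (3*i':ℤ) := by positivity
    omega
  have h2u : p * q < p * 2 := by omega
  have hql : -2 < q := lt_of_mul_lt_mul_left h2l hppos.le
  have hqu : q < 2 := lt_of_mul_lt_mul_left h2u hppos.le
  have hq3 : q = -1 ∨ q = 0 ∨ q = 1 := by omega
  rcases hq3 with rfl | rfl | rfl <;> omega

-- case k ≡ 0 (mod 3)
lemma indep0 (k : ℕ) (hk : 2 ≤ k) (hk3 : k % 3 = 0) :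
    IsIndepSet ({1, k, k + 1} : Finset ℕ)
      {x : ℤ | x % (2*(k:ℤ)+1) ∈
        ((Finset.range (k/3)).image (fun t : ℕ => (3*t : ℤ))) ∪
        ((Finset.range (k/3)).image (fun t : ℕ => ((k:ℤ)+2+3*t : ℤ)))} := by
  intro a ha b hb hab hS
  simp only [Set.mem_setOf_eq, Finset.mem_union, Finset.mem_image, Finset.mem_range] at ha hb
  simp only [Finset.mem_insert, Finset.mem_singleton] at hS
  set p : ℤ := 2*(k:ℤ) + 1 with hp
  have hppos : (0:ℤ) < p := by omega
  have hka : ∃ t : ℕ, t < k/3 ∧ (a % p = (3*t:ℤ) ∨ a % p = (k:ℤ)+2+3*t) := by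
    rcases ha with ⟨t, ht, hte⟩ | ⟨t, ht, hte⟩ <;> exact ⟨t, ht, by omega⟩
  have hkb : ∃ t : ℕ, t < k/3 ∧ (b % p = (3*t:ℤ) ∨ b % p = (k:ℤ)+2+3*t) := by
    rcases hb with ⟨t, ht, hte⟩ | ⟨t, ht, hte⟩ <;> exact ⟨t, ht, by omega⟩
  obtain ⟨t, ht, hta⟩ := hka
  obtain ⟨t', ht', htb⟩ := hkb
  clear ha hb
  have hma := Int.emod_add_mul_ediv a p
  have hmb := Int.emod_add_mul_ediv b p
  obtain ⟨q, hab'⟩ : ∃ q : ℤ, a - b = (a % p - b % p) + p * q :=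
    ⟨a/p - b/p, by rw [mul_sub]; linarith [hma, hmb]⟩
  have hares : (0 ≤ a % p ∧ a % p < p) := ⟨Int.emod_nonneg _ (by omega), Int.emod_lt_of_pos _ hppos⟩
  have hbres : (0 ≤ b % p ∧ b % p < p) := ⟨Int.emod_nonneg _ (by omega), Int.emod_lt_of_pos _ hppos⟩
  have habs : -((k:ℤ)+1) ≤ a - b ∧ a - b ≤ (k:ℤ)+1 := by omega
  have h2l : p * (-2) < p * q := by
    have h1 : p * q = (a - b) - (a % p - b % p) := by linarith [hab']
    have hkp : (k:ℤ) + 1 < p := by omega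
    linarith [habs.1, hares.2, hbres.1]
  have h2u : p * q < p * 2 := by
    have h1 : p * q = (a - b) - (a % p - b % p) := by linarith [hab']
    have hkp : (k:ℤ) + 1 < p := by omega
    linarith [habs.2, hares.1, hbres.2]
  have hql : -2 < q := lt_of_mul_lt_mul_left h2l hppos.le
  have hqu : q < 2 := lt_of_mul_lt_mul_left h2u hppos.le
  have hq3 : q = -1 ∨ q = 0 ∨ q = 1 := by omega
  rcases hq3 with rfl | rfl | rfl <;> rcases hta with h1 | h1 <;> rcases htb with h2 | h2 <;> omega


/-- Upper bound via the chain lemma, all k ≥ 2. -/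
lemma ub_chain (k : ℕ) (hk : 2 ≤ k) (A : Set ℤ) (hA : IsIndepSet ({1, k, k+1} : Finset ℕ) A) :
    density A ≤ (((2*k+1)/3 + 1 : ℕ) : ℝ) / (2*(k:ℝ)+4) := by
  set b : ℕ := (2*k+1)/3 + 1 with hb
  set c : ℝ := (b:ℝ) / (2*(k:ℝ)+4) with hc
  have hden : (0:ℝ) < 2*(k:ℝ)+4 := by positivity
  have hcpos : 0 ≤ c := by positivity
  apply density_le A c (c * ((k:ℝ)+1))
  intro N
  have hfin : (A ∩ Set.Icc (-(N:ℤ)) (N:ℤ)).Finite :=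
    Set.Finite.inter_of_right (Set.finite_Icc _ _) A
  have hncard : (A ∩ Set.Icc (-(N:ℤ)) (N:ℤ)).ncard = hfin.toFinset.card :=
    Set.ncard_eq_toFinset_card _ hfin
  set F := hfin.toFinset with hF
  have hmemF : ∀ x, x ∈ F ↔ x ∈ A ∧ -(N:ℤ) ≤ x ∧ x ≤ N := by
    intro x
    rw [hF, Set.Finite.mem_toFinset]
    simp [Set.mem_Icc]
  rcases Finset.eq_empty_or_nonempty F with hFe | hFne
  · rw [hncard, hFe]
    simp only [Finset.card_empty, Nat.cast_zero]
    positivity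
  · have hIb := indep_finset_bound k hk F hFne (fun a ha bb hbb hab =>
      hA a ((hmemF a).mp ha).1 bb ((hmemF bb).mp hbb).1 hab)
    have hbz : ((b:ℕ):ℤ) = (2*(k:ℤ)+1) / 3 + 1 := by
      rw [hb]; push_cast [Int.natCast_ediv]; omega
    have hmaxN : F.max' hFne ≤ (N:ℤ) := by
      apply Finset.max'_le
      intro x hx
      exact ((hmemF x).mp hx).2.2
    have hminN : -(N:ℤ) ≤ F.min' hFne := by
      have := F.min'_mem hFne
      exact ((hmemF _).mp this).2.1
    have hbznn : (0:ℤ) ≤ (b:ℤ) := by positivity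
    have hIb2 : (2*(k:ℤ)+4) * (2 * F.card) ≤ (b:ℤ) * (4*N + 2*(k:ℤ) + 4) := by
      rw [hbz]
      calc (2*(k:ℤ)+4) * (2 * F.card) ≤
          ((2*(k:ℤ)+1) / 3 + 1) * (2*(F.max' hFne) - 2*(F.min' hFne) + (2*(k:ℤ)+1) + 3) := hIb
        _ ≤ ((2*(k:ℤ)+1) / 3 + 1) * (4*N + 2*(k:ℤ) + 4) := by
            apply mul_le_mul_of_nonneg_left (by omega) (by positivity)
    -- cast to ℝ
    have hIbR : (2*(k:ℝ)+4) * (2 * (F.card:ℝ)) ≤ (b:ℝ) * (4*(N:ℝ) + 2*(k:ℝ) + 4) := by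
      exact_mod_cast hIb2
    rw [hncard]
    have hrhs : c * (2*(N:ℝ)+1) + c * ((k:ℝ)+1) = (b:ℝ) * (4*(N:ℝ) + 2*(k:ℝ) + 4) / (2*(2*(k:ℝ)+4)) := by
      rw [hc]
      field_simp
      ring
    rw [hrhs, le_div_iff₀ (by positivity)]
    linarith
/-- Upper bound for the k ≡ 0 case. -/
lemma ub_k0 (k : ℕ) (hk : 2 ≤ k) (hk3 : k % 3 = 0) (A : Set ℤ)
    (hA : IsIndepSet ({1, k, k+1} : Finset ℕ) A) :
    density A ≤ 2*((k/3 : ℕ):ℝ) / (6*((k/3 : ℕ):ℝ)+1) := by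
  set j : ℕ := k/3 with hj
  have hj1 : 1 ≤ j := by omega
  set c : ℝ := 2*(j:ℝ) / (6*(j:ℝ)+1) with hc
  have hcpos : 0 ≤ c := by positivity
  apply density_le A c (2*(j:ℝ))
  intro N
  have hdiff : ∀ a ∈ A, ∀ b ∈ A, a ≠ b →
      a - b ≠ 1 ∧ a - b ≠ -1 ∧ a - b ≠ 3*(j:ℤ) ∧ a - b ≠ -(3*(j:ℤ)) ∧
      a - b ≠ 3*(j:ℤ)+1 ∧ a - b ≠ -(3*(j:ℤ)+1) := by
    intro a ha bb hbb hab
    have h := hA a ha bb hbb hab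
    simp only [Finset.mem_insert, Finset.mem_singleton, not_or] at h
    obtain ⟨h1, h2, h3⟩ := h
    omega
  have hI := count_k0 j hj1 A hdiff N
  have hQr : (((2*N) / (6*j+1) + 1 : ℕ) : ℝ) ≤ (2*(N:ℝ)) / (6*(j:ℝ)+1) + 1 := by
    push_cast
    have := Nat.cast_div_le (α := ℝ) (m := 2*N) (n := 6*j+1)
    push_cast at this
    linarith
  have hIr : ((A ∩ Set.Icc (-(N:ℤ)) (N:ℤ)).ncard : ℝ) ≤ 2*(j:ℝ) * (((2*N) / (6*j+1) + 1 : ℕ) : ℝ) := by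
    exact_mod_cast hI
  have hd : (0:ℝ) < 6*(j:ℝ)+1 := by positivity
  calc ((A ∩ Set.Icc (-(N:ℤ)) (N:ℤ)).ncard : ℝ)
      ≤ 2*(j:ℝ) * (((2*N) / (6*j+1) + 1 : ℕ) : ℝ) := hIr
    _ ≤ 2*(j:ℝ) * ((2*(N:ℝ)) / (6*(j:ℝ)+1) + 1) := by
        apply mul_le_mul_of_nonneg_left hQr (by positivity)
    _ = c * (2*(N:ℝ)) + 2*(j:ℝ) := by rw [hc]; field_simp
    _ ≤ c * (2*(N:ℝ)+1) + 2*(j:ℝ) := by nlinarith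


/-- The independence ratio of `G({1, k, k+1})` for `k ≥ 2`, by residue of `k` mod 3. -/
theorem indRatio_one_k_ksucc (k : ℕ) (hk : 2 ≤ k) :
    (k % 3 = 0 → indRatio ({1, k, k + 1} : Finset ℕ) = (2 * (k : ℝ)) / (6 * (k : ℝ) + 3)) ∧
    (k % 3 = 1 → indRatio ({1, k, k + 1} : Finset ℕ) = 1 / 3) ∧
    (k % 3 = 2 → indRatio ({1, k, k + 1} : Finset ℕ) = ((k : ℝ) + 1) / (3 * (k : ℝ) + 6)) := by
  refine ⟨?_, ?_, ?_⟩ <;> intro hk3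
  · -- k ≡ 0 (mod 3)
    obtain ⟨s, hs⟩ : ∃ s, k = 3*s := ⟨k/3, by omega⟩
    have hs1 : 1 ≤ s := by omega
    set target : ℝ := (2 * (k : ℝ)) / (6 * (k : ℝ) + 3) with htarget
    set B : Finset ℤ := ((Finset.range (k/3)).image (fun t : ℕ => (3*t : ℤ))) ∪
        ((Finset.range (k/3)).image (fun t : ℕ => ((k:ℤ)+2+3*t : ℤ))) with hB
    set A0 : Set ℤ := {x : ℤ | x % (2*(k:ℤ)+1) ∈ B} with hA0
    have hind : IsIndepSet ({1, k, k + 1} : Finset ℕ) A0 := indep0 k hk hk3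
    have hc : ((2*k+1 : ℕ):ℤ) = 2*(k:ℤ)+1 := by push_cast; ring
    have hBb : ∀ bb ∈ B, 0 ≤ bb ∧ bb < ((2*k+1 : ℕ):ℤ) := by
      intro bb hbb
      rw [hB, Finset.mem_union] at hbb
      rcases hbb with h | h
      · obtain ⟨t, ht, rfl⟩ := Finset.mem_image.mp h
        simp only [Finset.mem_range] at ht
        constructor
        · positivity
        · omega
      · obtain ⟨t, ht, rfl⟩ := Finset.mem_image.mp h
        simp only [Finset.mem_range] at ht
        constructor
        · positivity
        · omega
    have hcard : B.card = 2*s := by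
      rw [hB, Finset.card_union_of_disjoint, Finset.card_image_of_injective,
        Finset.card_image_of_injective, Finset.card_range]
      · omega
      · intro x y hxy
        have hxy' : ((k:ℤ)+2+3*x = (k:ℤ)+2+3*y) := hxy
        omega
      · intro x y hxy
        have hxy' : ((3*x : ℤ) = 3*y) := hxy
        omega
      · rw [Finset.disjoint_left]
        intro bb h1 h2
        obtain ⟨t, ht, rfl⟩ := Finset.mem_image.mp h1
        obtain ⟨t', ht', he⟩ := Finset.mem_image.mp h2
        simp only [Finset.mem_range] at ht ht'
        omega
    have hdens : density A0 = target := by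
      have h1 : A0 = {x : ℤ | x % ((2*k+1 : ℕ):ℤ) ∈ B} := by rw [hA0, hc]
      rw [h1, periodic_density (2*k+1) (by omega) B hBb, hcard]
      rw [htarget]
      have h2 : ((2*k+1 : ℕ):ℝ) = 2*(k:ℝ)+1 := by push_cast; ring
      rw [h2]
      have hkr : (k:ℝ) = 3*(s:ℝ) := by exact_mod_cast congrArg (Nat.cast : ℕ → ℝ) hs
      rw [hkr]
      push_cast
      have hne1 : 6*(s:ℝ)+1 > 0 := by positivity
      have hne2 : 18*(s:ℝ)+3 > 0 := by positivity
      field_simp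
      ring
    have hub : ∀ x ∈ density '' {A : Set ℤ | IsIndepSet ({1, k, k + 1} : Finset ℕ) A}, x ≤ target := by
      rintro x ⟨A, hA, rfl⟩
      calc density A ≤ 2*((k/3 : ℕ):ℝ) / (6*((k/3 : ℕ):ℝ)+1) := ub_k0 k hk hk3 A hA
        _ = target := by
            have h3 : (k/3 : ℕ) = s := by omega
            rw [h3, htarget]
            have hkr : (k:ℝ) = 3*(s:ℝ) := by exact_mod_cast congrArg (Nat.cast : ℕ → ℝ) hs
            rw [hkr]
            have hne1 : 6*(s:ℝ)+1 > 0 := by positivity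
            field_simp
    have hmem : target ∈ density '' {A : Set ℤ | IsIndepSet ({1, k, k + 1} : Finset ℕ) A} :=
      ⟨A0, hind, hdens⟩
    exact le_antisymm (csSup_le ⟨target, hmem⟩ hub) (le_csSup ⟨target, fun x hx => hub x hx⟩ hmem)
  · -- k ≡ 1 (mod 3)
    obtain ⟨s, hs⟩ : ∃ s, k = 3*s+1 := ⟨k/3, by omega⟩
    set target : ℝ := (1:ℝ)/3 with htarget
    set A0 : Set ℤ := {x : ℤ | x % (3:ℤ) ∈ ({0} : Finset ℤ)} with hA0
    have hind : IsIndepSet ({1, k, k + 1} : Finset ℕ) A0 := indep1 k hk hk3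
    have hdens : density A0 = target := by
      have h1 : A0 = {x : ℤ | x % ((3:ℕ):ℤ) ∈ ({0} : Finset ℤ)} := by
        rw [show ((3:ℕ):ℤ) = (3:ℤ) by norm_num]
      rw [h1, periodic_density 3 (by norm_num) {0} (by intro b hb; simp at hb; omega)]
      simp [htarget]
    have hub : ∀ x ∈ density '' {A : Set ℤ | IsIndepSet ({1, k, k + 1} : Finset ℕ) A}, x ≤ target := by
      rintro x ⟨A, hA, rfl⟩
      calc density A ≤ (((2*k+1)/3 + 1 : ℕ) : ℝ) / (2*(k:ℝ)+4) := ub_chain k hk A hA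
        _ = target := by
            have h3 : (2*k+1)/3 + 1 = 2*s+2 := by omega
            rw [h3, htarget]
            have hkr : (k:ℝ) = 3*(s:ℝ)+1 := by exact_mod_cast congrArg (Nat.cast : ℕ → ℝ) hs
            rw [hkr]
            push_cast
            have hne1 : 6*(s:ℝ)+6 > 0 := by positivity
            field_simp
            ring
    have hmem : target ∈ density '' {A : Set ℤ | IsIndepSet ({1, k, k + 1} : Finset ℕ) A} :=
      ⟨A0, hind, hdens⟩
    exact le_antisymm (csSup_le ⟨target, hmem⟩ hub) (le_csSup ⟨target, fun x hx => hub x hx⟩ hmem)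
  · -- k ≡ 2 (mod 3)
    obtain ⟨s, hs⟩ : ∃ s, k = 3*s+2 := ⟨k/3, by omega⟩
    set target : ℝ := ((k : ℝ) + 1) / (3 * (k : ℝ) + 6) with htarget
    set B : Finset ℤ := (Finset.range ((k+1)/3)).image (fun i : ℕ => (3*i : ℤ)) with hB
    set A0 : Set ℤ := {x : ℤ | x % ((k:ℤ)+2) ∈ B} with hA0
    have hind : IsIndepSet ({1, k, k + 1} : Finset ℕ) A0 := indep2 k hk hk3
    have hc : ((k+2 : ℕ):ℤ) = (k:ℤ)+2 := by push_cast; ring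
    have hBb : ∀ bb ∈ B, 0 ≤ bb ∧ bb < ((k+2 : ℕ):ℤ) := by
      intro bb hbb
      rw [hB] at hbb
      obtain ⟨t, ht, rfl⟩ := Finset.mem_image.mp hbb
      simp only [Finset.mem_range] at ht
      constructor
      · positivity
      · omega
    have hcard : B.card = s+1 := by
      rw [hB, Finset.card_image_of_injective, Finset.card_range]
      · omega
      · intro x y hxy
        have hxy' : ((3*x : ℤ) = 3*y) := hxy
        omega
    have hdens : density A0 = target := by
      have h1 : A0 = {x : ℤ | x % ((k+2 : ℕ):ℤ) ∈ B} := by rw [hA0, hc]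
      rw [h1, periodic_density (k+2) (by omega) B hBb, hcard]
      rw [htarget]
      have hkr : (k:ℝ) = 3*(s:ℝ)+2 := by exact_mod_cast congrArg (Nat.cast : ℕ → ℝ) hs
      push_cast
      rw [hkr]
      have hne1 : 3*(s:ℝ)+4 > 0 := by positivity
      have hne2 : 9*(s:ℝ)+12 > 0 := by positivity
      field_simp
      ring
    have hub : ∀ x ∈ density '' {A : Set ℤ | IsIndepSet ({1, k, k + 1} : Finset ℕ) A}, x ≤ target := by
      rintro x ⟨A, hA, rfl⟩
      calc density A ≤ (((2*k+1)/3 + 1 : ℕ) : ℝ) / (2*(k:ℝ)+4) := ub_chain k hk A hA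
        _ = target := by
            have h3 : (2*k+1)/3 + 1 = 2*s+2 := by omega
            rw [h3, htarget]
            have hkr : (k:ℝ) = 3*(s:ℝ)+2 := by exact_mod_cast congrArg (Nat.cast : ℕ → ℝ) hs
            rw [hkr]
            push_cast
            have hne1 : 6*(s:ℝ)+10 > 0 := by positivity
            have hne2 : 9*(s:ℝ)+12 > 0 := by positivity
            field_simp
            ring
    have hmem : target ∈ density '' {A : Set ℤ | IsIndepSet ({1, k, k + 1} : Finset ℕ) A} :=
      ⟨A0, hind, hdens⟩
    exact le_antisymm (csSup_le ⟨target, hmem⟩ hub) (le_csSup ⟨target, fun x hx => hub x hx⟩ hmem)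
end
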